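/- arXiv:2103.15699 — 14 statements merged into one kernel-verified Lean document; each statement's English description precedes it below -/
import Mathlib

section
/- Let X, Y, Y1 be complex Hilbert spaces and let Z : Y → X and Z1 : Y1 → X be bounded linear operators with ran Z = ran Z1. Then there exists a bounded linear operator W : Y1 → Y such that Z1 = Z ∘ W, ker W = ker Z1, and ran W = closure(ran Z*), where Z* denotes the Hilbert-space adjoint of Z. -/
open ContinuousLinearMap

theorem ker_eq_orthogonal_range_adjoint
    {X Y : Type}
    [NormedAddCommGroup X] [InnerProductSpace ℂ X] [CompleteSpace X]
    [NormedAddCommGroup Y] [InnerProductSpace ℂ Y] [CompleteSpace Y]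
    (Z : Y →L[ℂ] X) :
    LinearMap.ker (Z : Y →ₗ[ℂ] X) = (LinearMap.range (adjoint Z : X →ₗ[ℂ] Y))ᗮ := by
  ext y
  simp only [LinearMap.mem_ker, Submodule.mem_orthogonal, ContinuousLinearMap.coe_coe]
  constructor
  · rintro h u ⟨x, rfl⟩
    rw [ContinuousLinearMap.coe_coe, ContinuousLinearMap.adjoint_inner_left, h, inner_zero_right]
  · intro h
    have := h (adjoint Z (Z y)) ⟨Z y, rfl⟩
    rw [ContinuousLinearMap.adjoint_inner_left] at this
    exact inner_self_eq_zero.mp this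

/-- Let `X`, `Y`, `Y1` be complex Hilbert spaces and let `Z : Y → X` and
`Z1 : Y1 → X` be bounded linear operators with `ran Z = ran Z1`. Then there exists a bounded
linear operator `W : Y1 → Y` such that `Z1 = Z ∘ W`, `ker W = ker Z1`, and
`ran W = closure (ran Z*)`. -/
theorem exists_factor_of_range_eq
    {X Y Y1 : Type}
    [NormedAddCommGroup X] [InnerProductSpace ℂ X] [CompleteSpace X]
    [NormedAddCommGroup Y] [InnerProductSpace ℂ Y] [CompleteSpace Y]
    [NormedAddCommGroup Y1] [InnerProductSpace ℂ Y1] [CompleteSpace Y1]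
    (Z : Y →L[ℂ] X) (Z1 : Y1 →L[ℂ] X)
    (hran : Set.range ⇑Z = Set.range ⇑Z1) :
    ∃ W : Y1 →L[ℂ] Y,
      Z1 = Z ∘L W ∧
      LinearMap.ker (W : Y1 →ₗ[ℂ] Y) = LinearMap.ker (Z1 : Y1 →ₗ[ℂ] X) ∧
      Set.range ⇑W = closure (Set.range ⇑(adjoint Z)) := by
  set K : Submodule ℂ Y := LinearMap.ker (Z : Y →ₗ[ℂ] X) with hK
  set M : Submodule ℂ Y := Kᗮ with hM
  -- closure of range of adjoint, as a set, is M
  have hMclosure : (M : Set Y) = closure (Set.range ⇑(adjoint Z)) := by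
    have h1 : M = (LinearMap.range (adjoint Z : X →ₗ[ℂ] Y))ᗮᗮ := by
      rw [hM, hK, ker_eq_orthogonal_range_adjoint]
    rw [h1, Submodule.orthogonal_orthogonal_eq_closure, Submodule.topologicalClosure_coe,
      LinearMap.coe_range, ContinuousLinearMap.coe_coe]
  have hMK : Mᗮ = K := K.orthogonal_orthogonal
  -- g : M →ₗ X, restriction of Z
  set g : M →ₗ[ℂ] X := Z.toLinearMap.comp M.subtype with hg
  have hginj : Function.Injective g := by
    intro m₁ m₂ h
    have hsub : (m₁ : Y) - m₂ ∈ K := by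
      simp only [hK, LinearMap.mem_ker, map_sub]
      simpa [hg, sub_eq_zero] using h
    have hsubM : (m₁ : Y) - m₂ ∈ M := M.sub_mem m₁.2 m₂.2
    have : (m₁ : Y) - m₂ ∈ K ⊓ Kᗮ := ⟨hsub, hsubM⟩
    rw [Submodule.inf_orthogonal_eq_bot] at this
    ext
    exact sub_eq_zero.mp this
  have hgrange : ∀ x : X, x ∈ Set.range ⇑Z1 → ∃ m : M, g m = x := by
    intro x hx
    rw [← hran] at hx
    obtain ⟨y, rfl⟩ := hx
    refine ⟨M.orthogonalProjection y, ?_⟩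
    have hy : y - (M.orthogonalProjection y : Y) ∈ Mᗮ :=
      Submodule.sub_starProjection_mem_orthogonal y
    rw [hMK] at hy
    have hy' : Z (y - (M.orthogonalProjection y : Y)) = 0 := hy
    show Z ((M.orthogonalProjection y : Y)) = Z y
    rw [map_sub, sub_eq_zero] at hy'
    exact hy'.symm
  -- define W as a function, then linear map
  choose w hw using fun y1 => hgrange (Z1 y1) ⟨y1, rfl⟩
  -- uniqueness
  have huniq : ∀ (y1 : Y1) (m : M), g m = Z1 y1 → m = w y1 := fun y1 m h =>
    hginj (h.trans (hw y1).symm)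
  set Wfun : Y1 → Y := fun y1 => (w y1 : Y) with hWfun
  have hWmem : ∀ y1, Wfun y1 ∈ M := fun y1 => (w y1).2
  have hWZ : ∀ y1, Z (Wfun y1) = Z1 y1 := fun y1 => hw y1
  have hWchar : ∀ (y1 : Y1) (y : Y), y ∈ M → Z y = Z1 y1 → y = Wfun y1 := by
    intro y1 y hyM hyZ
    have := huniq y1 ⟨y, hyM⟩ (by simpa [hg] using hyZ)
    exact congrArg Subtype.val this
  have hadd : ∀ a b, Wfun (a + b) = Wfun a + Wfun b := by
    intro a b
    refine (hWchar (a + b) (Wfun a + Wfun b) (M.add_mem (hWmem a) (hWmem b)) ?_).symm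
    rw [map_add, hWZ, hWZ, map_add]
  have hsmul : ∀ (c : ℂ) a, Wfun (c • a) = c • Wfun a := by
    intro c a
    refine (hWchar (c • a) (c • Wfun a) (M.smul_mem c (hWmem a)) ?_).symm
    rw [map_smul, hWZ, map_smul]
  set Wlin : Y1 →ₗ[ℂ] Y := { toFun := Wfun, map_add' := hadd, map_smul' := hsmul } with hWlin
  have hgraph : IsClosed (Wlin.graph : Set (Y1 × Y)) := by
    have heq : (Wlin.graph : Set (Y1 × Y)) =
        {p : Y1 × Y | p.2 ∈ M} ∩ {p : Y1 × Y | Z p.2 - Z1 p.1 = 0} := by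
      ext ⟨y1, y⟩
      simp only [Set.mem_inter_iff, Set.mem_setOf_eq, SetLike.mem_coe,
        LinearMap.mem_graph_iff]
      constructor
      · rintro rfl
        exact ⟨hWmem y1, by rw [show Wlin y1 = Wfun y1 from rfl, hWZ, sub_self]⟩
      · rintro ⟨h1, h2⟩
        exact hWchar y1 y h1 (sub_eq_zero.mp h2)
    rw [heq]
    have hc : Continuous fun p : Y1 × Y => Z p.2 - Z1 p.1 := by fun_prop
    exact (K.isClosed_orthogonal.preimage continuous_snd).inter
      (isClosed_eq hc continuous_const)
  have hcont : Continuous Wlin := Wlin.continuous_of_isClosed_graph hgraph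
  refine ⟨⟨Wlin, hcont⟩, ?_, ?_, ?_⟩
  · ext y1
    exact (hWZ y1).symm
  · ext y1
    simp only [LinearMap.mem_ker, ContinuousLinearMap.coe_mk', ContinuousLinearMap.coe_coe]
    constructor
    · intro h
      rw [← hWZ y1, show Wfun y1 = (0 : Y) from h, map_zero]
    · intro h
      have : (0 : Y) = Wfun y1 := hWchar y1 0 M.zero_mem (by rw [map_zero, h])
      exact this.symm
  · rw [← hMclosure]
    ext y
    simp only [Set.mem_range, SetLike.mem_coe]
    constructor
    · rintro ⟨y1, rfl⟩
      exact hWmem y1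
    · intro hy
      have hZy : Z y ∈ Set.range ⇑Z1 := by rw [← hran]; exact ⟨y, rfl⟩
      obtain ⟨y1, hy1⟩ := hZy
      exact ⟨y1, (hWchar y1 y hy hy1.symm).symm⟩
end

section
/- The following statements are equivalent: (i) L(A,B) is a closed subspace of H × K; (ii) ran(A*A + B*B) is closed in E; (iii) ran A* + ran B* is closed in E. -/
open ContinuousLinearMap Submodule

local notation "⟪" x ", " y "⟫" => @inner ℂ _ _ x y

variable {E F : Type*} [NormedAddCommGroup E] [InnerProductSpace ℂ E] [CompleteSpace E]
  [NormedAddCommGroup F] [InnerProductSpace ℂ F] [CompleteSpace F]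

lemma orth_range_eq_ker_adjoint (T : E →L[ℂ] F) :
    (LinearMap.range (T : E →ₗ[ℂ] F))ᗮ = LinearMap.ker (adjoint T : F →ₗ[ℂ] E) := by
  ext x
  simp only [Submodule.mem_orthogonal, LinearMap.mem_ker, LinearMap.mem_range, ContinuousLinearMap.coe_coe,
    forall_exists_index, forall_apply_eq_imp_iff]
  constructor
  · intro h
    refine ext_inner_left ℂ fun v => ?_
    rw [adjoint_inner_right, h v, inner_zero_right]
  · intro h v
    rw [← adjoint_inner_right T v x, h, inner_zero_right]

lemma range_adjoint_eq_orth_ker (T : E →L[ℂ] F)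
    (h : IsClosed ((LinearMap.range (T : E →ₗ[ℂ] F) : Submodule ℂ F) : Set F)) :
    LinearMap.range (adjoint T : F →ₗ[ℂ] E) = (LinearMap.ker (T : E →ₗ[ℂ] F))ᗮ := by
  refine le_antisymm ?_ ?_
  · rintro _ ⟨y, rfl⟩
    rw [Submodule.mem_orthogonal]
    intro u hu
    rw [ContinuousLinearMap.coe_coe, adjoint_inner_right, (show T u = 0 from LinearMap.mem_ker.mp hu), inner_zero_left]
  · intro x hx
    haveI : CompleteSpace (LinearMap.range (T : E →ₗ[ℂ] F)) := h.completeSpace_coe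
    set R : Submodule ℂ F := LinearMap.range (T : E →ₗ[ℂ] F) with hR
    set N : Submodule ℂ E := (LinearMap.ker (T : E →ₗ[ℂ] F))ᗮ with hN
    let T₁ : N →L[ℂ] R := (T.comp N.subtypeL).codRestrict R
      (fun n => LinearMap.mem_range_self _ _)
    have hT₁ : ∀ n : N, ((T₁ n : F)) = T (n : E) := fun n => rfl
    have hker : LinearMap.ker (T₁ : N →ₗ[ℂ] R) = ⊥ := by
      rw [Submodule.eq_bot_iff]
      rintro ⟨n, hn⟩ hmem
      have hTn : T n = 0 := by
        have := congrArg Subtype.val (LinearMap.mem_ker.mp hmem)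
        simpa [hT₁] using this
      have h0 : ⟪n, n⟫ = 0 :=
        (Submodule.mem_orthogonal _ _).mp hn n (LinearMap.mem_ker.mpr hTn)
      exact Subtype.ext (inner_self_eq_zero.mp h0)
    have hsurj : LinearMap.range (T₁ : N →ₗ[ℂ] R) = ⊤ := by
      rw [Submodule.eq_top_iff']
      rintro ⟨y, hy⟩
      obtain ⟨v, rfl⟩ := hy
      obtain ⟨k, hk, n, hn, hv⟩ := (LinearMap.ker (T : E →ₗ[ℂ] F)).exists_add_mem_mem_orthogonal v
      refine ⟨⟨n, hn⟩, Subtype.ext ?_⟩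
      show T n = T v
      rw [hv, map_add, (show T k = 0 from LinearMap.mem_ker.mp hk), zero_add]
    let S : N ≃L[ℂ] R := ContinuousLinearEquiv.ofBijective T₁ hker hsurj
    let ψ : R →L[ℂ] ℂ := (innerSL ℂ x) ∘L (N.subtypeL ∘L (S.symm : R →L[ℂ] N))
    let u₀ : R := (InnerProductSpace.toDual ℂ R).symm ψ
    refine ⟨(u₀ : F), ?_⟩
    refine ext_inner_right ℂ fun v => ?_
    rw [ContinuousLinearMap.coe_coe, adjoint_inner_left]
    have hyR : T v ∈ R := LinearMap.mem_range_self _ _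
    set yR : R := ⟨T v, hyR⟩ with hyR'
    have h1 : ⟪(u₀ : F), T v⟫ = ⟪u₀, yR⟫ := rfl
    have h2 : ⟪u₀, yR⟫ = ψ yR := InnerProductSpace.toDual_symm_apply
    have h3 : ψ yR = ⟪x, ((S.symm yR : N) : E)⟫ := rfl
    set n : E := ((S.symm yR : N) : E) with hn'
    have hTn : T n = T v := by
      have := congrArg Subtype.val (S.apply_symm_apply yR)
      exact this
    have h4 : ⟪x, n⟫ = ⟪x, v⟫ := by
      have hker' : v - n ∈ LinearMap.ker (T : E →ₗ[ℂ] F) := by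
        rw [LinearMap.mem_ker, map_sub, ContinuousLinearMap.coe_coe, hTn, sub_self]
      have := (Submodule.mem_orthogonal' _ _).mp hx _ hker'
      rw [inner_sub_right, sub_eq_zero] at this
      rw [this]
    rw [h1, h2, h3, h4]

lemma isClosed_range_adjoint_of (T : E →L[ℂ] F)
    (h : IsClosed ((LinearMap.range (T : E →ₗ[ℂ] F) : Submodule ℂ F) : Set F)) :
    IsClosed ((LinearMap.range (adjoint T : F →ₗ[ℂ] E) : Submodule ℂ E) : Set E) := by
  rw [range_adjoint_eq_orth_ker T h]
  exact (LinearMap.ker (T : E →ₗ[ℂ] F)).isClosed_orthogonal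

lemma isClosed_range_iff_adjoint (T : E →L[ℂ] F) :
    IsClosed ((LinearMap.range (T : E →ₗ[ℂ] F) : Submodule ℂ F) : Set F) ↔
      IsClosed ((LinearMap.range (adjoint T : F →ₗ[ℂ] E) : Submodule ℂ E) : Set E) := by
  constructor
  · exact isClosed_range_adjoint_of T
  · intro h
    have := isClosed_range_adjoint_of (adjoint T) h
    rwa [adjoint_adjoint] at this

lemma ker_adjoint_comp_self (T : E →L[ℂ] F) :
    LinearMap.ker (adjoint T ∘L T : E →ₗ[ℂ] E) = LinearMap.ker (T : E →ₗ[ℂ] F) := by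
  ext x
  simp only [LinearMap.mem_ker, ContinuousLinearMap.coe_coe, ContinuousLinearMap.coe_comp', Function.comp_apply]
  constructor
  · intro hx
    have h0 : ⟪T x, T x⟫ = 0 := by
      rw [← adjoint_inner_right, hx, inner_zero_right]
    exact inner_self_eq_zero.mp h0
  · intro hx; rw [hx, map_zero]

lemma closure_range_adjoint (T : E →L[ℂ] F) :
    (LinearMap.range (adjoint T : F →ₗ[ℂ] E)).topologicalClosure = (LinearMap.ker (T : E →ₗ[ℂ] F))ᗮ := by
  rw [← Submodule.orthogonal_orthogonal_eq_closure, orth_range_eq_ker_adjoint, adjoint_adjoint]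

lemma closure_range_adjoint_comp (T : E →L[ℂ] F) :
    (LinearMap.range (adjoint T ∘L T : E →ₗ[ℂ] E)).topologicalClosure = (LinearMap.ker (T : E →ₗ[ℂ] F))ᗮ := by
  rw [← Submodule.orthogonal_orthogonal_eq_closure, orth_range_eq_ker_adjoint,
    adjoint_comp, adjoint_adjoint, _root_.ker_adjoint_comp_self]

lemma isClosed_range_iff_adjoint_comp (T : E →L[ℂ] F) :
    IsClosed ((LinearMap.range (T : E →ₗ[ℂ] F) : Submodule ℂ F) : Set F) ↔
      IsClosed ((LinearMap.range (adjoint T ∘L T : E →ₗ[ℂ] E) : Submodule ℂ E) : Set E) := by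
  constructor
  · intro h
    have heq : LinearMap.range (adjoint T ∘L T : E →ₗ[ℂ] E) = LinearMap.range (adjoint T : F →ₗ[ℂ] E) := by
      refine le_antisymm ?_ ?_
      · rintro _ ⟨x, rfl⟩; exact ⟨T x, rfl⟩
      · rintro _ ⟨y, rfl⟩
        haveI : CompleteSpace (LinearMap.range (T : E →ₗ[ℂ] F)) := h.completeSpace_coe
        obtain ⟨p, hp, q, hq, hy⟩ := (LinearMap.range (T : E →ₗ[ℂ] F)).exists_add_mem_mem_orthogonal y
        obtain ⟨w, rfl⟩ := hp
        have hq0 : adjoint T q = 0 := by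
          have hm : q ∈ LinearMap.ker (adjoint T : F →ₗ[ℂ] E) := by
            rw [← orth_range_eq_ker_adjoint]; exact hq
          exact hm
        refine ⟨w, ?_⟩
        show adjoint T (T w) = adjoint T y
        rw [hy, map_add, hq0, add_zero]; rfl
    rw [heq]
    exact isClosed_range_adjoint_of T h
  · intro h
    rw [isClosed_range_iff_adjoint]
    have heq : LinearMap.range (adjoint T : F →ₗ[ℂ] E) = LinearMap.range (adjoint T ∘L T : E →ₗ[ℂ] E) := by
      refine le_antisymm ?_ ?_
      · have h1 : LinearMap.range (adjoint T : F →ₗ[ℂ] E)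
            ≤ (LinearMap.range (adjoint T : F →ₗ[ℂ] E)).topologicalClosure :=
          Submodule.le_topologicalClosure _
        have h2 : (LinearMap.range (adjoint T ∘L T : E →ₗ[ℂ] E)).topologicalClosure
            = LinearMap.range (adjoint T ∘L T : E →ₗ[ℂ] E) :=
          h.submodule_topologicalClosure_eq
        rwa [closure_range_adjoint, ← closure_range_adjoint_comp, h2] at h1
      · rintro _ ⟨x, rfl⟩; exact ⟨T x, rfl⟩
    rw [heq]; exact h

/-- For bounded operators `A : E → H`, `B : E → K` between complex Hilbert
spaces, the following are equivalent: (i) `L(A,B) = {(A f, B f) : f ∈ E}` is a closed subspace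
of `H × K`; (ii) `ran (A*A + B*B)` is closed in `E`; (iii) `ran A* + ran B*` is closed in `E`. -/
theorem LAB_closed_iff
    {E H K : Type}
    [NormedAddCommGroup E] [InnerProductSpace ℂ E] [CompleteSpace E]
    [NormedAddCommGroup H] [InnerProductSpace ℂ H] [CompleteSpace H]
    [NormedAddCommGroup K] [InnerProductSpace ℂ K] [CompleteSpace K]
    (A : E →L[ℂ] H) (B : E →L[ℂ] K) :
    (IsClosed (Set.range fun f : E => ((A f, B f) : H × K)) ↔
      IsClosed (Set.range ⇑(adjoint A ∘L A + adjoint B ∘L B))) ∧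
    (IsClosed (Set.range fun f : E => ((A f, B f) : H × K)) ↔
      IsClosed ((LinearMap.range (adjoint A : H →ₗ[ℂ] E) ⊔ LinearMap.range (adjoint B : K →ₗ[ℂ] E) :
        Submodule ℂ E) : Set E)) := by
  set e := WithLp.prodContinuousLinearEquiv 2 ℂ H K with he
  set T : E →L[ℂ] WithLp 2 (H × K) :=
    (e.symm : H × K →L[ℂ] WithLp 2 (H × K)) ∘L (A.prod B) with hT
  -- (i) transfer
  have himg : (Set.range fun f : E => ((A f, B f) : H × K))
      = e '' ((LinearMap.range (T : E →ₗ[ℂ] WithLp 2 (H × K)) : Submodule ℂ (WithLp 2 (H × K))) : Set (WithLp 2 (H × K))) := by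
    rw [LinearMap.coe_range, ← Set.range_comp]
    apply congrArg
    funext f
    simp [hT, he]
  have h_i : IsClosed (Set.range fun f : E => ((A f, B f) : H × K)) ↔
      IsClosed ((LinearMap.range (T : E →ₗ[ℂ] WithLp 2 (H × K)) : Submodule ℂ (WithLp 2 (H × K))) : Set (WithLp 2 (H × K))) := by
    rw [himg]
    exact e.toHomeomorph.isClosed_image
  -- adjoint of T
  set S : WithLp 2 (H × K) →L[ℂ] E :=
    (adjoint A ∘L (ContinuousLinearMap.fst ℂ H K ∘L (e : WithLp 2 (H × K) →L[ℂ] H × K))) +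
    (adjoint B ∘L (ContinuousLinearMap.snd ℂ H K ∘L (e : WithLp 2 (H × K) →L[ℂ] H × K))) with hS
  have hSadj : S = adjoint T := by
    rw [eq_adjoint_iff]
    intro x y
    simp [hS, hT, he, inner_add_left, adjoint_inner_left, WithLp.prod_inner_apply]
  -- (ii)
  have hcomp : adjoint A ∘L A + adjoint B ∘L B = adjoint T ∘L T := by
    rw [← hSadj]
    ext f
    simp [hS, hT, he]
  -- (iii)
  have hrangeS : LinearMap.range (adjoint T : WithLp 2 (H × K) →ₗ[ℂ] E)
      = LinearMap.range (adjoint A : H →ₗ[ℂ] E) ⊔ LinearMap.range (adjoint B : K →ₗ[ℂ] E) := by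
    rw [← hSadj]
    refine le_antisymm ?_ (sup_le ?_ ?_)
    · rintro _ ⟨x, rfl⟩
      simp only [hS, ContinuousLinearMap.add_apply, ContinuousLinearMap.coe_comp',
        Function.comp_apply]
      exact Submodule.add_mem_sup (LinearMap.mem_range_self _ _) (LinearMap.mem_range_self _ _)
    · rintro _ ⟨h, rfl⟩
      refine ⟨e.symm (h, 0), ?_⟩
      simp [hS]
    · rintro _ ⟨k, rfl⟩
      refine ⟨e.symm (0, k), ?_⟩
      simp [hS]
  constructor
  · rw [h_i, isClosed_range_iff_adjoint_comp T, hcomp, LinearMap.coe_range, ContinuousLinearMap.coe_coe]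
  · rw [h_i, isClosed_range_iff_adjoint T, hrangeS]
end

section
/- The following two implications hold: (i) if ker A ⊆ ker B and ran A is closed in H, then there exists c ≥ 0 such that ‖B f‖ ≤ c ‖A f‖ for all f ∈ E (i.e., the relation L(A,B) is a bounded operator); (ii) if ker B ⊆ ker A and ran B is closed in K, then there exists c ≥ 0 such that ‖A f‖ ≤ c ‖B f‖ for all f ∈ E (i.e., the inverse relation L(B,A) is a bounded operator). -/
open ContinuousLinearMap

private lemma key_bound
    {E H K : Type}
    [NormedAddCommGroup E] [InnerProductSpace ℂ E] [CompleteSpace E]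
    [NormedAddCommGroup H] [InnerProductSpace ℂ H] [CompleteSpace H]
    [NormedAddCommGroup K] [InnerProductSpace ℂ K] [CompleteSpace K]
    (A : E →L[ℂ] H) (B : E →L[ℂ] K)
    (hker : LinearMap.ker (A : E →ₗ[ℂ] H) ≤ LinearMap.ker (B : E →ₗ[ℂ] K)) (hcl : IsClosed (Set.range ⇑A)) :
    ∃ c : ℝ, 0 ≤ c ∧ ∀ f : E, ‖B f‖ ≤ c * ‖A f‖ := by
  set R : Submodule ℂ H := LinearMap.range (A : E →ₗ[ℂ] H) with hR
  have hclR : IsClosed (R : Set H) := by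
    rw [hR]
    simpa [LinearMap.coe_range] using hcl
  haveI : CompleteSpace R := hclR.completeSpace_coe
  let A' : E →L[ℂ] R := A.codRestrict R (fun x => LinearMap.mem_range_self _ x)
  have hsurj : Function.Surjective A' := by
    rintro ⟨y, x, rfl⟩
    exact ⟨x, rfl⟩
  obtain ⟨C, hCpos, hC⟩ := A'.exists_preimage_norm_le hsurj
  refine ⟨‖B‖ * C, by positivity, fun f => ?_⟩
  obtain ⟨x, hx, hxn⟩ := hC (A' f)
  have hA : A x = A f := congrArg Subtype.val hx
  have hBf : B f = B x := by
    have hmem : f - x ∈ LinearMap.ker (B : E →ₗ[ℂ] K) := hker (by simp [LinearMap.mem_ker, hA])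
    have h2 : B f - B x = 0 := by simpa [map_sub] using LinearMap.mem_ker.mp hmem
    exact sub_eq_zero.mp h2
  calc ‖B f‖ = ‖B x‖ := by rw [hBf]
    _ ≤ ‖B‖ * ‖x‖ := B.le_opNorm x
    _ ≤ ‖B‖ * (C * ‖A' f‖) := by
        exact mul_le_mul_of_nonneg_left hxn (norm_nonneg _)
    _ = ‖B‖ * C * ‖A f‖ := by
        rw [mul_assoc]
        rfl

/-- For bounded operators `A : E → H`, `B : E → K` between complex Hilbert
spaces: (i) if `ker A ⊆ ker B` and `ran A` is closed, then there is `c ≥ 0` with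
`‖B f‖ ≤ c ‖A f‖` for all `f` (the relation `L(A,B)` is a bounded operator); (ii) if
`ker B ⊆ ker A` and `ran B` is closed, then there is `c ≥ 0` with `‖A f‖ ≤ c ‖B f‖` for all
`f` (the inverse relation `L(B,A)` is a bounded operator). -/
theorem operatorRangeRelation_boundedness
    {E H K : Type}
    [NormedAddCommGroup E] [InnerProductSpace ℂ E] [CompleteSpace E]
    [NormedAddCommGroup H] [InnerProductSpace ℂ H] [CompleteSpace H]
    [NormedAddCommGroup K] [InnerProductSpace ℂ K] [CompleteSpace K]
    (A : E →L[ℂ] H) (B : E →L[ℂ] K) :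
    (LinearMap.ker (A : E →ₗ[ℂ] H) ≤ LinearMap.ker (B : E →ₗ[ℂ] K) → IsClosed (Set.range ⇑A) →
      ∃ c : ℝ, 0 ≤ c ∧ ∀ f : E, ‖B f‖ ≤ c * ‖A f‖) ∧
    (LinearMap.ker (B : E →ₗ[ℂ] K) ≤ LinearMap.ker (A : E →ₗ[ℂ] H) → IsClosed (Set.range ⇑B) →
      ∃ c : ℝ, 0 ≤ c ∧ ∀ f : E, ‖A f‖ ≤ c * ‖B f‖) := by
  exact ⟨key_bound A B, key_bound B A⟩
end

section
/- Assume A*A + B*B = Q, where Q is an orthogonal projection in E (Q = Q* = Q²). Then L(A,B) is a closed subspace of H × K, the orthogonal projection of H × K onto L(A,B) is the map (h,k) ↦ (A A* h + A B* k, B A* h + B B* k), and the orthogonal projection of K × H onto the adjoint relation L(A,B)* = {(k,h) ∈ K × H : B* k = A* h} is the map (k,h) ↦ ((I − B B*) k + B A* h, A B* k + (I − A A*) h). -/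
open ContinuousLinearMap
open scoped InnerProductSpace

set_option maxHeartbeats 2000000 in
/-- Assume `A*A + B*B = Q` with `Q` an orthogonal projection in `E`
(`Q = Q* = Q²`). Then `L(A,B)` is a closed subspace of `H × K`, the orthogonal projection of
`H × K` onto `L(A,B)` is `(h,k) ↦ (A A* h + A B* k, B A* h + B B* k)` (i.e. this vector lies
in `L(A,B)` and the difference is orthogonal to `L(A,B)`, where the inner product on a product
of Hilbert spaces is the sum of the componentwise inner products), and the orthogonal
projection of `K × H` onto the adjoint relation `L(A,B)* = {(k,h) : B* k = A* h}` is
`(k,h) ↦ ((I − B B*) k + B A* h, A B* k + (I − A A*) h)`. -/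
theorem projection_onto_LAB_of_normalizedQ
    {E H K : Type}
    [NormedAddCommGroup E] [InnerProductSpace ℂ E] [CompleteSpace E]
    [NormedAddCommGroup H] [InnerProductSpace ℂ H] [CompleteSpace H]
    [NormedAddCommGroup K] [InnerProductSpace ℂ K] [CompleteSpace K]
    (A : E →L[ℂ] H) (B : E →L[ℂ] K) (Q : E →L[ℂ] E)
    (hQ : adjoint A ∘L A + adjoint B ∘L B = Q)
    (hQsa : adjoint Q = Q) (hQidem : Q ∘L Q = Q) :
    IsClosed (Set.range fun f : E => ((A f, B f) : H × K)) ∧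
    (∀ p : H × K,
      ((A (adjoint A p.1) + A (adjoint B p.2),
        B (adjoint A p.1) + B (adjoint B p.2)) : H × K)
          ∈ Set.range (fun f : E => ((A f, B f) : H × K)) ∧
      ∀ q ∈ Set.range (fun f : E => ((A f, B f) : H × K)),
        ⟪p.1 - (A (adjoint A p.1) + A (adjoint B p.2)), q.1⟫_ℂ +
          ⟪p.2 - (B (adjoint A p.1) + B (adjoint B p.2)), q.2⟫_ℂ = 0) ∧
    (∀ p : K × H,
      (((p.1 - B (adjoint B p.1)) + B (adjoint A p.2),
        A (adjoint B p.1) + (p.2 - A (adjoint A p.2))) : K × H)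
          ∈ {q : K × H | adjoint B q.1 = adjoint A q.2} ∧
      ∀ q ∈ {q : K × H | adjoint B q.1 = adjoint A q.2},
        ⟪p.1 - ((p.1 - B (adjoint B p.1)) + B (adjoint A p.2)), q.1⟫_ℂ +
          ⟪p.2 - (A (adjoint B p.1) + (p.2 - A (adjoint A p.2))), q.2⟫_ℂ = 0) := by

  -- pointwise form of hQ
  have hQf : ∀ f : E, adjoint A (A f) + adjoint B (B f) = Q f := fun f =>
    congrFun (congrArg DFunLike.coe hQ) f
  -- A and B kill (1 - Q)
  have hker : ∀ f : E, A (f - Q f) = 0 ∧ B (f - Q f) = 0 := by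
    intro f
    set g := f - Q f with hg
    have hQg : Q g = 0 := by
      have h2 := congrFun (congrArg DFunLike.coe hQidem) f
      simp only [comp_apply] at h2
      simp [hg, map_sub, h2]
    have h1 : ⟪A g, A g⟫_ℂ + ⟪B g, B g⟫_ℂ = 0 := by
      rw [← adjoint_inner_left A, ← adjoint_inner_left B, ← inner_add_left, hQf, hQg,
        inner_zero_left]
    rw [inner_self_eq_norm_sq_to_K, inner_self_eq_norm_sq_to_K] at h1
    have h2 : (‖A g‖ ^ 2 + ‖B g‖ ^ 2 : ℝ) = 0 := by
      have h1' : ((‖A g‖ ^ 2 + ‖B g‖ ^ 2 : ℝ) : ℂ) = 0 := by push_cast; exact h1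
      exact_mod_cast h1'
    constructor <;> [skip; skip] <;>
      · rw [← norm_eq_zero]
        nlinarith [sq_nonneg ‖A g‖, sq_nonneg ‖B g‖, norm_nonneg (A g), norm_nonneg (B g)]
  have hAQ : ∀ f : E, A (Q f) = A f := by
    intro f
    have := (hker f).1
    rw [map_sub, sub_eq_zero] at this
    exact this.symm
  have hBQ : ∀ f : E, B (Q f) = B f := by
    intro f
    have := (hker f).2
    rw [map_sub, sub_eq_zero] at this
    exact this.symm
  have hAQ' : A ∘L Q = A := by ext f; exact hAQ f
  have hBQ' : B ∘L Q = B := by ext f; exact hBQ f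
  have hQA : ∀ x : H, Q (adjoint A x) = adjoint A x := by
    intro x
    have h := congrArg adjoint hAQ'
    rw [adjoint_comp, hQsa] at h
    exact congrFun (congrArg DFunLike.coe h) x
  have hQB : ∀ x : K, Q (adjoint B x) = adjoint B x := by
    intro x
    have h := congrArg adjoint hBQ'
    rw [adjoint_comp, hQsa] at h
    exact congrFun (congrArg DFunLike.coe h) x
  refine ⟨?_, ?_, ?_⟩
  · -- closedness
    have hset : Set.range (fun f : E => ((A f, B f) : H × K)) =
        {p : H × K | ((A (adjoint A p.1) + A (adjoint B p.2),
          B (adjoint A p.1) + B (adjoint B p.2)) : H × K) = p} := by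
      ext p
      constructor
      · rintro ⟨f, rfl⟩
        simp only [Set.mem_setOf_eq]
        have h1 : A (adjoint A (A f)) + A (adjoint B (B f)) = A f := by
          rw [← map_add, hQf, hAQ]
        have h2 : B (adjoint A (A f)) + B (adjoint B (B f)) = B f := by
          rw [← map_add, hQf, hBQ]
        exact Prod.ext h1 h2
      · intro hp
        exact ⟨adjoint A p.1 + adjoint B p.2, by
          simp only [map_add]; exact hp⟩
    rw [hset]
    exact isClosed_eq (by fun_prop) continuous_id
  · -- projection onto L(A,B)
    intro p
    constructor
    · exact ⟨adjoint A p.1 + adjoint B p.2, by simp [map_add]⟩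
    · rintro q ⟨f, rfl⟩
      simp only
      rw [← adjoint_inner_left A, ← adjoint_inner_left B, ← inner_add_left]
      have key : adjoint A (p.1 - (A (adjoint A p.1) + A (adjoint B p.2))) +
          adjoint B (p.2 - (B (adjoint A p.1) + B (adjoint B p.2))) = 0 := by
        have h1 := hQf (adjoint A p.1 + adjoint B p.2)
        have h2 : Q (adjoint A p.1 + adjoint B p.2) = adjoint A p.1 + adjoint B p.2 := by
          rw [map_add, hQA, hQB]
        simp only [map_add, map_sub] at h1 ⊢
        rw [hQA, hQB] at h1
        rw [sub_add_sub_comm, sub_eq_zero]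
        exact h1.symm
      rw [key, inner_zero_left]
  · -- projection onto the adjoint relation
    intro p
    constructor
    · show adjoint B _ = adjoint A _
      have e1 : adjoint A (A (adjoint B p.1)) + adjoint B (B (adjoint B p.1)) =
          adjoint B p.1 := by rw [hQf, hQB]
      have e2 : adjoint A (A (adjoint A p.2)) + adjoint B (B (adjoint A p.2)) =
          adjoint A p.2 := by rw [hQf, hQA]
      simp only [map_add, map_sub]
      rw [eq_sub_of_add_eq' e1, eq_sub_of_add_eq' e2]
      abel
    · intro q hq
      have hq' : adjoint B q.1 = adjoint A q.2 := hq
      have h1 : p.1 - ((p.1 - B (adjoint B p.1)) + B (adjoint A p.2)) =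
          B (adjoint B p.1 - adjoint A p.2) := by rw [map_sub]; abel
      have h2 : p.2 - (A (adjoint B p.1) + (p.2 - A (adjoint A p.2))) =
          -(A (adjoint B p.1 - adjoint A p.2)) := by rw [map_sub]; abel
      rw [h1, h2, inner_neg_left, ← adjoint_inner_right, hq', adjoint_inner_right]
      ring
end

section
/- If the subspace L(A,B) is closed in H × K, then there exist a complex Hilbert space E0 and bounded linear operators A' : E0 → H and B' : E0 → K such that A'*A' + B'*B' = I (the identity on E0) and {(A' g, B' g) : g ∈ E0} = L(A,B); that is, every closed operator range relation can be represented by a normalized pair. -/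
open ContinuousLinearMap

/-- A representation of a subset `L` of `H × K` by a *normalized pair* of bounded operators:
a complex Hilbert space `E0` and bounded operators `A' : E0 → H`, `B' : E0 → K` with
`A'*A' + B'*B' = I` whose joint range is `L`. -/
structure NormalizedPairRep
    (H K : Type)
    [NormedAddCommGroup H] [InnerProductSpace ℂ H] [CompleteSpace H]
    [NormedAddCommGroup K] [InnerProductSpace ℂ K] [CompleteSpace K]
    (L : Set (H × K)) where
  E0 : Type
  [nacg : NormedAddCommGroup E0]
  [ips : InnerProductSpace ℂ E0]
  [cs : CompleteSpace E0]
  A' : E0 →L[ℂ] H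
  B' : E0 →L[ℂ] K
  normalized : adjoint A' ∘L A' + adjoint B' ∘L B' = ContinuousLinearMap.id ℂ E0
  rep : Set.range (fun g : E0 => ((A' g, B' g) : H × K)) = L

/-- If the subspace `L(A,B) = {(A f, B f) : f ∈ E}` is closed in `H × K`,
then it can be represented by a normalized pair: there are a complex Hilbert space `E0` and
bounded operators `A' : E0 → H`, `B' : E0 → K` with `A'*A' + B'*B' = I` and
`{(A' g, B' g) : g ∈ E0} = L(A,B)`. -/
theorem closed_LAB_normalized_pair
    {E H K : Type}
    [NormedAddCommGroup E] [InnerProductSpace ℂ E] [CompleteSpace E]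
    [NormedAddCommGroup H] [InnerProductSpace ℂ H] [CompleteSpace H]
    [NormedAddCommGroup K] [InnerProductSpace ℂ K] [CompleteSpace K]
    (A : E →L[ℂ] H) (B : E →L[ℂ] K)
    (hclosed : IsClosed (Set.range fun f : E => ((A f, B f) : H × K))) :
    Nonempty (NormalizedPairRep H K (Set.range fun f : E => ((A f, B f) : H × K))) := by
  -- the identification of `WithLp 2 (H × K)` with `H × K`
  let e : WithLp 2 (H × K) ≃L[ℂ] H × K := WithLp.prodContinuousLinearEquiv 2 ℂ H K
  -- the range as a submodule of `WithLp 2 (H × K)`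
  let T : E →ₗ[ℂ] WithLp 2 (H × K) :=
    (e.symm : (H × K) →ₗ[ℂ] WithLp 2 (H × K)) ∘ₗ ((A.prod B) : E →ₗ[ℂ] H × K)
  let S : Submodule ℂ (WithLp 2 (H × K)) := LinearMap.range T
  have hS : IsClosed (S : Set (WithLp 2 (H × K))) := by
    have : (S : Set (WithLp 2 (H × K))) = e.symm '' (Set.range fun f : E => ((A f, B f) : H × K)) := by
      ext x
      simp only [SetLike.mem_coe, LinearMap.mem_range, Set.mem_image, Set.mem_range]
      constructor
      · rintro ⟨f, rfl⟩; exact ⟨(A f, B f), ⟨f, rfl⟩, rfl⟩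
      · rintro ⟨y, ⟨f, rfl⟩, rfl⟩; exact ⟨f, rfl⟩
    rw [this]
    exact (e.symm.toHomeomorph.isClosedEmbedding.isClosed_iff_image_isClosed).mp hclosed
  haveI : CompleteSpace S := hS.completeSpace_coe
  -- the normalized pair
  let A' : S →L[ℂ] H := (ContinuousLinearMap.fst ℂ H K) ∘L (e : WithLp 2 (H × K) →L[ℂ] H × K) ∘L S.subtypeL
  let B' : S →L[ℂ] K := (ContinuousLinearMap.snd ℂ H K) ∘L (e : WithLp 2 (H × K) →L[ℂ] H × K) ∘L S.subtypeL
  have hA' : ∀ g : S, A' g = (g : WithLp 2 (H × K)).fst := fun g => rfl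
  have hB' : ∀ g : S, B' g = (g : WithLp 2 (H × K)).snd := fun g => rfl
  refine ⟨⟨S, A', B', ?_, ?_⟩⟩
  · refine ContinuousLinearMap.ext fun g => ?_
    apply ext_inner_right ℂ
    intro v
    simp only [ContinuousLinearMap.id_apply, ContinuousLinearMap.add_apply,
      ContinuousLinearMap.comp_apply, inner_add_left, adjoint_inner_left]
    rw [hA', hA', hB', hB', Submodule.coe_inner, WithLp.prod_inner_apply]
    rfl
  · ext x
    simp only [Set.mem_range]
    constructor
    · rintro ⟨g, rfl⟩
      obtain ⟨f, hf⟩ := g.2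
      refine ⟨f, ?_⟩
      rw [hA', hB', ← hf]
      rfl
    · rintro ⟨f, rfl⟩
      refine ⟨⟨T f, ⟨f, rfl⟩⟩, ?_⟩
      rw [hA', hB']
      rfl
end

section
/- There exists a unique pair of bounded linear operators C_A : E → H and C_B : E → K such that ‖C_A‖ ≤ 1, ‖C_B‖ ≤ 1, A = C_A ∘ (A*A + B*B)^{1/2}, B = C_B ∘ (A*A + B*B)^{1/2}, and C_A f = 0 and C_B f = 0 for every f ∈ ker A ∩ ker B. -/
open ContinuousLinearMap Topology
open scoped InnerProductSpace NNReal

section Aux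

variable {E H : Type}
  [NormedAddCommGroup E] [InnerProductSpace ℂ E] [CompleteSpace E]
  [NormedAddCommGroup H] [InnerProductSpace ℂ H] [CompleteSpace H]

/-- Existence of a contractive factor. -/
lemma aux_exists (A : E →L[ℂ] H) (S : E →L[ℂ] E) (hS : IsSelfAdjoint S)
    (hbound : ∀ f, ‖A f‖ ≤ ‖S f‖) :
    ∃ C : E →L[ℂ] H, ‖C‖ ≤ 1 ∧ A = C ∘L S ∧ ∀ f, S f = 0 → C f = 0 := by
  set R : Submodule ℂ E := LinearMap.range (S : E →ₗ[ℂ] E) with hR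
  have ker_le : LinearMap.ker (S : E →ₗ[ℂ] E) ≤ LinearMap.ker (A : E →ₗ[ℂ] H) := by
    intro f hf
    simp only [LinearMap.mem_ker] at hf ⊢
    have h := hbound f
    rw [show (S : E →ₗ[ℂ] E) f = S f from rfl] at hf
    rw [hf, norm_zero] at h
    exact norm_le_zero_iff.mp h
  set φ₀ : R →ₗ[ℂ] H :=
    ((LinearMap.ker (S : E →ₗ[ℂ] E)).liftQ (A : E →ₗ[ℂ] H) ker_le) ∘ₗ
      (LinearMap.quotKerEquivRange (S : E →ₗ[ℂ] E)).symm.toLinearMap with hφ₀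
  have key : ∀ (f : E) (hf : (S : E →ₗ[ℂ] E) f ∈ R),
      φ₀ ⟨(S : E →ₗ[ℂ] E) f, hf⟩ = A f := by
    intro f hf
    have h1 : (LinearMap.quotKerEquivRange (S : E →ₗ[ℂ] E)).symm ⟨(S : E →ₗ[ℂ] E) f, hf⟩ =
        Submodule.Quotient.mk f := by
      rw [LinearEquiv.symm_apply_eq]
      exact Subtype.ext (LinearMap.quotKerEquivRange_apply_mk _ _).symm
    simp only [hφ₀, LinearMap.comp_apply, LinearEquiv.coe_coe, h1, Submodule.liftQ_apply]
    rfl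
  have hb : ∀ x : R, ‖φ₀ x‖ ≤ 1 * ‖x‖ := by
    rintro ⟨x, hx⟩
    obtain ⟨f, rfl⟩ := hx
    rw [key f ⟨f, rfl⟩]
    simpa using hbound f
  set φ : R →L[ℂ] H := φ₀.mkContinuous 1 hb with hφ
  have hφnorm : ‖φ‖ ≤ 1 := φ₀.mkContinuous_norm_le zero_le_one hb
  set Rc := R.topologicalClosure with hRc
  set e : R →L[ℂ] Rc :=
    LinearMap.mkContinuous (Submodule.inclusion R.le_topologicalClosure) 1
      (fun x => by rw [one_mul]; exact le_of_eq rfl) with he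
  have h_e : ∀ x : R, ‖x‖ ≤ (1 : ℝ≥0) * ‖e x‖ := by
    intro x
    rw [NNReal.coe_one, one_mul]
    exact le_of_eq rfl
  have hdense : DenseRange e := by
    refine IsInducing.subtypeVal.dense_iff.2 fun x => ?_
    have hx : (x : E) ∈ closure (R : Set E) := x.prop
    convert hx
    rw [← Set.range_comp]
    ext y
    constructor
    · rintro ⟨y, rfl⟩; exact y.prop
    · intro hy; exact ⟨⟨y, hy⟩, rfl⟩
  set g : Rc →L[ℂ] H :=
    φ.extend e with hg
  have hgnorm : ‖g‖ ≤ 1 := by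
    have h := φ.opNorm_extend_le hdense h_e
    calc ‖g‖ ≤ (1 : ℝ≥0) * ‖φ‖ := h
    _ ≤ 1 := by simpa using hφnorm
  haveI : CompleteSpace Rc := R.isClosed_topologicalClosure.completeSpace_coe
  set P : E →L[ℂ] Rc := Rc.orthogonalProjectionOnto with hP
  refine ⟨g ∘L P, ?_, ?_, ?_⟩
  · calc ‖g ∘L P‖ ≤ ‖g‖ * ‖P‖ := opNorm_comp_le _ _
    _ ≤ 1 * 1 := mul_le_mul hgnorm (Submodule.orthogonalProjectionOnto_norm_le _) (norm_nonneg P) zero_le_one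
    _ = 1 := one_mul 1
  · ext f
    have hmemR : (S : E →ₗ[ℂ] E) f ∈ R := ⟨f, rfl⟩
    have hmem : S f ∈ Rc := R.le_topologicalClosure hmemR
    have hproj : P (S f) = ⟨S f, hmem⟩ :=
      Submodule.orthogonalProjectionOnto_mem_subspace_eq_self (⟨S f, hmem⟩ : Rc)
    have hco : (⟨S f, hmem⟩ : Rc) = e ⟨(S : E →ₗ[ℂ] E) f, hmemR⟩ := by
      apply Subtype.ext; rfl
    simp only [comp_apply, coe_comp', Function.comp_apply, hproj, hco]
    rw [hg, ContinuousLinearMap.extend_eq (h_dense := hdense) (h_e := (isUniformEmbedding_of_bound e h_e).isUniformInducing)]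
    exact (key f hmemR).symm
  · intro f hf
    have hfR : f ∈ Rᗮ := by
      rw [Submodule.mem_orthogonal]
      rintro u ⟨w, rfl⟩
      rw [hS.isSymmetric w f, show (S : E →ₗ[ℂ] E) f = S f from rfl, hf, inner_zero_right]
    have horth : f ∈ Rcᗮ := by
      have h1 : Rc = Rᗮᗮ := (Submodule.orthogonal_orthogonal_eq_closure R).symm
      rw [h1]
      exact Rᗮ.le_orthogonal_orthogonal hfR
    have hP0 : P f = 0 := Submodule.orthogonalProjectionOnto_apply_of_mem_orthogonal horth
    simp only [comp_apply, hP0, map_zero]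

omit [CompleteSpace H] in
/-- Uniqueness of the contractive factor. -/
lemma aux_unique (A : E →L[ℂ] H) (S : E →L[ℂ] E) (hS : IsSelfAdjoint S)
    (C C' : E →L[ℂ] H) (hC : A = C ∘L S) (hC' : A = C' ∘L S)
    (h0 : ∀ f, S f = 0 → C f = 0) (h0' : ∀ f, S f = 0 → C' f = 0) : C = C' := by
  set M : Submodule ℂ E := LinearMap.range (S : E →ₗ[ℂ] E) ⊔ LinearMap.ker (S : E →ₗ[ℂ] E)
    with hM
  have hMdense : Dense (M : Set E) := by
    rw [Submodule.dense_iff_topologicalClosure_eq_top, Submodule.topologicalClosure_eq_top_iff]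
    rw [Submodule.eq_bot_iff]
    intro x hx
    have hSx : S x = 0 := by
      apply ext_inner_left ℂ
      intro v
      have h := hx (S v) (Submodule.mem_sup_left ⟨v, rfl⟩)
      rw [inner_zero_right, ← h]
      exact (hS.isSymmetric v x).symm
    have hxM : x ∈ M := Submodule.mem_sup_right (by simpa [LinearMap.mem_ker] using hSx)
    exact inner_self_eq_zero.mp (hx x hxM)
  apply ContinuousLinearMap.coeFn_injective
  refine Continuous.ext_on hMdense C.continuous C'.continuous ?_
  intro x hx
  obtain ⟨y, hy, z, hz, rfl⟩ := Submodule.mem_sup.mp hx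
  obtain ⟨f, rfl⟩ := hy
  have hz0 : S z = 0 := hz
  have h1 : C ((S : E →ₗ[ℂ] E) f) = A f := by rw [hC]; rfl
  have h2 : C' ((S : E →ₗ[ℂ] E) f) = A f := by rw [hC']; rfl
  simp only [map_add, h1, h2, h0 z hz0, h0' z hz0]

end Aux
/-- Let `S = (A*A + B*B)^{1/2}` be the (unique) positive square root of
`A*A + B*B`. There exists a unique pair of bounded operators `C_A : E → H`, `C_B : E → K`
with `‖C_A‖ ≤ 1`, `‖C_B‖ ≤ 1`, `A = C_A ∘ S`, `B = C_B ∘ S`, and `C_A f = 0`, `C_B f = 0`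
for every `f ∈ ker A ∩ ker B`. -/
theorem exists_unique_contractive_factorization
    {E H K : Type}
    [NormedAddCommGroup E] [InnerProductSpace ℂ E] [CompleteSpace E]
    [NormedAddCommGroup H] [InnerProductSpace ℂ H] [CompleteSpace H]
    [NormedAddCommGroup K] [InnerProductSpace ℂ K] [CompleteSpace K]
    (A : E →L[ℂ] H) (B : E →L[ℂ] K)
    (S : E →L[ℂ] E) (hSpos : S.IsPositive)
    (hSsq : S ∘L S = adjoint A ∘L A + adjoint B ∘L B) :
    ∃! p : (E →L[ℂ] H) × (E →L[ℂ] K),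
      ‖p.1‖ ≤ 1 ∧ ‖p.2‖ ≤ 1 ∧ A = p.1 ∘L S ∧ B = p.2 ∘L S ∧
        ∀ f ∈ LinearMap.ker (A : E →ₗ[ℂ] H) ⊓ LinearMap.ker (B : E →ₗ[ℂ] K), p.1 f = 0 ∧ p.2 f = 0 := by
  have hSsa : IsSelfAdjoint S := hSpos.isSelfAdjoint
  have hid : ∀ f : E, ‖A f‖ ^ 2 + ‖B f‖ ^ 2 = ‖S f‖ ^ 2 := by
    intro f
    have h1 : ⟪S f, S f⟫_ℂ = ⟪A f, A f⟫_ℂ + ⟪B f, B f⟫_ℂ := by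
      calc ⟪S f, S f⟫_ℂ = ⟪f, S (S f)⟫_ℂ := hSsa.isSymmetric f (S f)
      _ = ⟪f, (S ∘L S) f⟫_ℂ := rfl
      _ = ⟪f, adjoint A (A f) + adjoint B (B f)⟫_ℂ := by rw [hSsq]; rfl
      _ = ⟪f, adjoint A (A f)⟫_ℂ + ⟪f, adjoint B (B f)⟫_ℂ := inner_add_right _ _ _
      _ = ⟪A f, A f⟫_ℂ + ⟪B f, B f⟫_ℂ := by rw [adjoint_inner_right, adjoint_inner_right]
    rw [inner_self_eq_norm_sq_to_K, inner_self_eq_norm_sq_to_K,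
      inner_self_eq_norm_sq_to_K] at h1
    exact_mod_cast h1.symm
  have hAle : ∀ f : E, ‖A f‖ ≤ ‖S f‖ := by
    intro f
    refine le_of_pow_le_pow_left₀ two_ne_zero (norm_nonneg _) ?_
    nlinarith [hid f, sq_nonneg ‖B f‖]
  have hBle : ∀ f : E, ‖B f‖ ≤ ‖S f‖ := by
    intro f
    refine le_of_pow_le_pow_left₀ two_ne_zero (norm_nonneg _) ?_
    nlinarith [hid f, sq_nonneg ‖A f‖]
  have hkerS : ∀ f : E, A f = 0 → B f = 0 → S f = 0 := by
    intro f hA hB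
    have : ‖S f‖ ^ 2 = 0 := by rw [← hid f, hA, hB]; simp
    have : ‖S f‖ = 0 := by
      have := pow_eq_zero_iff (n := 2) (by norm_num) |>.mp this
      exact this
    exact norm_eq_zero.mp this
  obtain ⟨CA, hCA1, hCA2, hCA3⟩ := aux_exists A S hSsa hAle
  obtain ⟨CB, hCB1, hCB2, hCB3⟩ := aux_exists B S hSsa hBle
  refine ⟨(CA, CB), ⟨hCA1, hCB1, hCA2, hCB2, ?_⟩, ?_⟩
  · intro f hf
    obtain ⟨hfA, hfB⟩ := Submodule.mem_inf.mp hf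
    have hfS : S f = 0 := hkerS f hfA hfB
    exact ⟨hCA3 f hfS, hCB3 f hfS⟩
  · rintro ⟨CA', CB'⟩ ⟨h1, h2, h3, h4, h5⟩
    have hS0 : ∀ f : E, S f = 0 → CA' f = 0 ∧ CB' f = 0 := by
      intro f hf
      apply h5
      rw [Submodule.mem_inf, LinearMap.mem_ker, LinearMap.mem_ker]
      constructor
      · have := hAle f; rw [hf, norm_zero] at this; exact norm_le_zero_iff.mp this
      · have := hBle f; rw [hf, norm_zero] at this; exact norm_le_zero_iff.mp this
    exact Prod.ext
      (aux_unique A S hSsa CA' CA h3 hCA2 (fun f hf => (hS0 f hf).1) hCA3)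
      (aux_unique B S hSsa CB' CB h4 hCB2 (fun f hf => (hS0 f hf).2) hCB3)
end

section
/- Let C_A and C_B be the operators associated with the pair (A,B). Then ker C_A ∩ ker C_B = ker A ∩ ker B, and the operator C_A* C_A + C_B* C_B is the orthogonal projection of E onto the closure of ran(A*A + B*B); in particular (C_A* C_A + C_B* C_B) h = h for all h ∈ closure(ran(A*A + B*B)) and (C_A* C_A + C_B* C_B) h = 0 for all h ∈ ker A ∩ ker B. -/
open ContinuousLinearMap

local notation "⟪" x ", " y "⟫" => @inner ℂ _ _ x y

private lemma aux_orth_range {E : Type} [NormedAddCommGroup E] [InnerProductSpace ℂ E]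
    [CompleteSpace E] (X : E →L[ℂ] E) (hX : adjoint X = X) :
    (LinearMap.range (X : E →ₗ[ℂ] E))ᗮ = LinearMap.ker (X : E →ₗ[ℂ] E) := by
  ext x
  simp only [Submodule.mem_orthogonal, LinearMap.mem_ker, ContinuousLinearMap.coe_coe, LinearMap.mem_range]
  constructor
  · intro hx
    have h := hx (X x) ⟨x, rfl⟩
    have h2 : ⟪X x, X x⟫ = 0 := by
      have : ⟪X x, x⟫ = ⟪x, X x⟫ := by
        nth_rewrite 1 [← hX]; exact adjoint_inner_left X x x
      have h3 : ⟪X (X x), x⟫ = 0 := hx (X (X x)) ⟨X x, rfl⟩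
      calc ⟪X x, X x⟫ = ⟪adjoint X (X x), x⟫ := (adjoint_inner_left X x (X x)).symm
        _ = ⟪X (X x), x⟫ := by rw [hX]
        _ = 0 := h3
    exact inner_self_eq_zero.mp h2
  · rintro hx _ ⟨y, rfl⟩
    calc ⟪X y, x⟫ = ⟪adjoint X y, x⟫ := by rw [hX]
      _ = ⟪y, X x⟫ := adjoint_inner_left X x y
      _ = 0 := by rw [hx, inner_zero_right]

private lemma aux_closure_range {E : Type} [NormedAddCommGroup E] [InnerProductSpace ℂ E]
    [CompleteSpace E] (X : E →L[ℂ] E) (hX : adjoint X = X) :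
    closure (Set.range ⇑X) = ((LinearMap.ker (X : E →ₗ[ℂ] E))ᗮ : Set E) := by
  have h1 := aux_orth_range X hX
  calc closure (Set.range ⇑X)
      = ((LinearMap.range (X : E →ₗ[ℂ] E)).topologicalClosure : Set E) := by
        rw [Submodule.topologicalClosure_coe, LinearMap.coe_range, ContinuousLinearMap.coe_coe]
    _ = ((LinearMap.range (X : E →ₗ[ℂ] E))ᗮᗮ : Set E) := by
        rw [Submodule.orthogonal_orthogonal_eq_closure]
    _ = _ := by rw [h1]

set_option maxHeartbeats 1000000 in
/-- Let `S = (A*A + B*B)^{1/2}` be the positive square root and let `C_A`,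
`C_B` be the unique contractions with `A = C_A ∘ S`, `B = C_B ∘ S` vanishing on
`ker A ∩ ker B`. Then `ker C_A ∩ ker C_B = ker A ∩ ker B` and `C_A* C_A + C_B* C_B` is the
orthogonal projection of `E` onto the closure of `ran (A*A + B*B)` (it is selfadjoint,
idempotent and its range is that closure); in particular it is the identity on
`closure (ran (A*A + B*B))` and vanishes on `ker A ∩ ker B`. -/
theorem CACB_projection_properties
    {E H K : Type}
    [NormedAddCommGroup E] [InnerProductSpace ℂ E] [CompleteSpace E]
    [NormedAddCommGroup H] [InnerProductSpace ℂ H] [CompleteSpace H]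
    [NormedAddCommGroup K] [InnerProductSpace ℂ K] [CompleteSpace K]
    (A : E →L[ℂ] H) (B : E →L[ℂ] K)
    (S : E →L[ℂ] E) (hSpos : S.IsPositive)
    (hSsq : S ∘L S = adjoint A ∘L A + adjoint B ∘L B)
    (CA : E →L[ℂ] H) (CB : E →L[ℂ] K)
    (hCAnorm : ‖CA‖ ≤ 1) (hCBnorm : ‖CB‖ ≤ 1)
    (hA : A = CA ∘L S) (hB : B = CB ∘L S)
    (hker : ∀ f ∈ LinearMap.ker (A : E →ₗ[ℂ] H) ⊓ LinearMap.ker (B : E →ₗ[ℂ] K), CA f = 0 ∧ CB f = 0) :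
    LinearMap.ker (CA : E →ₗ[ℂ] H) ⊓ LinearMap.ker (CB : E →ₗ[ℂ] K) = LinearMap.ker (A : E →ₗ[ℂ] H) ⊓ LinearMap.ker (B : E →ₗ[ℂ] K) ∧
    IsSelfAdjoint (adjoint CA ∘L CA + adjoint CB ∘L CB) ∧
    (adjoint CA ∘L CA + adjoint CB ∘L CB) ∘L (adjoint CA ∘L CA + adjoint CB ∘L CB) =
      adjoint CA ∘L CA + adjoint CB ∘L CB ∧
    Set.range ⇑(adjoint CA ∘L CA + adjoint CB ∘L CB) =
      closure (Set.range ⇑(adjoint A ∘L A + adjoint B ∘L B)) ∧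
    (∀ h ∈ closure (Set.range ⇑(adjoint A ∘L A + adjoint B ∘L B)),
      (adjoint CA ∘L CA + adjoint CB ∘L CB) h = h) ∧
    (∀ h ∈ LinearMap.ker (A : E →ₗ[ℂ] H) ⊓ LinearMap.ker (B : E →ₗ[ℂ] K),
      (adjoint CA ∘L CA + adjoint CB ∘L CB) h = 0) := by
  have hSa : adjoint S = S := isSelfAdjoint_iff'.mp hSpos.isSelfAdjoint
  set T : E →L[ℂ] E := adjoint CA ∘L CA + adjoint CB ∘L CB with hTdef
  have hTa : adjoint T = T := by
    rw [hTdef]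
    simp [map_add, adjoint_comp, adjoint_adjoint]
  have hinner : ∀ f : E, ⟪S f, S f⟫ = ⟪A f, A f⟫ + ⟪B f, B f⟫ := by
    intro f
    calc ⟪S f, S f⟫ = ⟪adjoint S f, S f⟫ := by rw [hSa]
      _ = ⟪f, S (S f)⟫ := adjoint_inner_left S (S f) f
      _ = ⟪f, (adjoint A ∘L A + adjoint B ∘L B) f⟫ := by
          rw [show S (S f) = (S ∘L S) f from rfl, hSsq]
      _ = ⟪f, adjoint A (A f)⟫ + ⟪f, adjoint B (B f)⟫ := by
          simp [inner_add_right]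
      _ = ⟪A f, A f⟫ + ⟪B f, B f⟫ := by rw [adjoint_inner_right, adjoint_inner_right]
  have hkerS : ∀ f : E, S f = 0 ↔ (A f = 0 ∧ B f = 0) := by
    intro f
    constructor
    · intro hf
      have h0 : (0 : ℂ) = ⟪A f, A f⟫ + ⟪B f, B f⟫ := by
        rw [← hinner f, hf, inner_zero_left]
      rw [inner_self_eq_norm_sq_to_K, inner_self_eq_norm_sq_to_K] at h0
      have h1 : (0 : ℝ) = ‖A f‖ ^ 2 + ‖B f‖ ^ 2 := by
        have h2 : ((0 : ℝ) : ℂ) = ((‖A f‖ ^ 2 + ‖B f‖ ^ 2 : ℝ) : ℂ) := by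
          push_cast
          exact h0
        exact_mod_cast h2
      constructor
      · have hn : ‖A f‖ = 0 := by nlinarith [norm_nonneg (A f), norm_nonneg (B f)]
        exact norm_eq_zero.mp hn
      · have hn : ‖B f‖ = 0 := by nlinarith [norm_nonneg (A f), norm_nonneg (B f)]
        exact norm_eq_zero.mp hn
    · rintro ⟨ha, hb⟩
      have h0 : ⟪S f, S f⟫ = 0 := by
        rw [hinner f, ha, hb, inner_zero_left, inner_zero_left, add_zero]
      exact inner_self_eq_zero.mp h0
  have hT0 : ∀ f : E, A f = 0 → B f = 0 → T f = 0 := by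
    intro f ha hb
    obtain ⟨h1, h2⟩ := hker f (by simp [Submodule.mem_inf, LinearMap.mem_ker, ha, hb])
    simp [hTdef, h1, h2]
  have hSTS : S ∘L T ∘L S = S ∘L S := by
    have h1 : S ∘L adjoint CA = adjoint A := by rw [hA, adjoint_comp, hSa]
    have h2 : S ∘L adjoint CB = adjoint B := by rw [hB, adjoint_comp, hSa]
    have h3 : S ∘L T ∘L S
        = (S ∘L adjoint CA) ∘L (CA ∘L S) + (S ∘L adjoint CB) ∘L (CB ∘L S) := by
      rw [hTdef]; ext x; simp
    rw [h3, h1, h2, ← hA, ← hB, hSsq]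
  have hTS : ∀ f : E, T (S f) = S f := by
    intro f
    set v := T (S f) - S f with hv
    have hSv : S v = 0 := by
      have h4 := congrFun (congrArg DFunLike.coe hSTS) f
      simp only [comp_apply] at h4
      simp [hv, map_sub, h4]
    have hTv : T v = 0 := hT0 v ((hkerS v).mp hSv).1 ((hkerS v).mp hSv).2
    have e1 : ⟪S f, v⟫ = 0 := by
      calc ⟪S f, v⟫ = ⟪adjoint S f, v⟫ := by rw [hSa]
        _ = ⟪f, S v⟫ := adjoint_inner_left S v f
        _ = 0 := by rw [hSv, inner_zero_right]
    have e2 : ⟪T (S f), v⟫ = 0 := by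
      calc ⟪T (S f), v⟫ = ⟪adjoint T (S f), v⟫ := by rw [hTa]
        _ = ⟪S f, T v⟫ := adjoint_inner_left T v (S f)
        _ = 0 := by rw [hTv, inner_zero_right]
    have hvv : ⟪v, v⟫ = 0 := by
      rw [hv, inner_sub_left, e2, e1, sub_zero]
    have : v = 0 := inner_self_eq_zero.mp hvv
    exact sub_eq_zero.mp this
  have hTid : ∀ h ∈ closure (Set.range ⇑S), T h = h := by
    have heq : Set.EqOn ⇑T id (Set.range ⇑S) := by
      rintro _ ⟨f, rfl⟩; exact hTS f
    intro h hh
    exact heq.closure T.continuous continuous_id hh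
  haveI : CompleteSpace (LinearMap.ker (S : E →ₗ[ℂ] E)) :=
    (ContinuousLinearMap.isClosed_ker S).completeSpace_coe
  have horth : ((LinearMap.ker (S : E →ₗ[ℂ] E))ᗮ : Set E) ⊆ closure (Set.range ⇑S) := by
    rw [aux_closure_range S hSa]
  have hdec : ∀ x : E, T x ∈ closure (Set.range ⇑S) ∧ S (x - T x) = 0 := by
    intro x
    obtain ⟨k, hk, m, hm, hx⟩ := (LinearMap.ker (S : E →ₗ[ℂ] E)).exists_add_mem_mem_orthogonal x
    have hk' : S k = 0 := LinearMap.mem_ker.mp hk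
    have hm' : m ∈ closure (Set.range ⇑S) := horth hm
    have hTx : T x = m := by
      rw [hx, map_add, hT0 k ((hkerS k).mp hk').1 ((hkerS k).mp hk').2, zero_add, hTid m hm']
    refine ⟨hTx ▸ hm', ?_⟩
    rw [hTx, hx, add_sub_cancel_right]
    exact hk'
  have hclos : closure (Set.range ⇑(adjoint A ∘L A + adjoint B ∘L B))
      = closure (Set.range ⇑S) := by
    rw [← hSsq]
    have hSSa : adjoint (S ∘L S) = S ∘L S := by rw [adjoint_comp, hSa]
    have hkk : LinearMap.ker ((S ∘L S : E →L[ℂ] E) : E →ₗ[ℂ] E) = LinearMap.ker (S : E →ₗ[ℂ] E) := by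
      ext f
      simp only [LinearMap.mem_ker, ContinuousLinearMap.coe_coe, ContinuousLinearMap.coe_comp', Function.comp_apply]
      constructor
      · intro hf
        have h0 : ⟪S f, S f⟫ = 0 := by
          calc ⟪S f, S f⟫ = ⟪adjoint S f, S f⟫ := by rw [hSa]
            _ = ⟪f, S (S f)⟫ := adjoint_inner_left S (S f) f
            _ = 0 := by rw [hf, inner_zero_right]
        exact inner_self_eq_zero.mp h0
      · intro hf; rw [hf, map_zero]
    rw [aux_closure_range (S ∘L S) hSSa, aux_closure_range S hSa, hkk]
  refine ⟨?_, ?_, ?_, ?_, ?_, ?_⟩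
  · ext f
    simp only [Submodule.mem_inf, LinearMap.mem_ker, ContinuousLinearMap.coe_coe]
    constructor
    · rintro ⟨h1, h2⟩
      have hTf : T f = 0 := by simp [hTdef, h1, h2]
      obtain ⟨_, hS⟩ := hdec f
      rw [hTf, sub_zero] at hS
      exact (hkerS f).mp hS
    · intro hf
      exact hker f (by simp [Submodule.mem_inf, LinearMap.mem_ker, hf.1, hf.2])
  · exact isSelfAdjoint_iff'.mpr hTa
  · ext x
    simp only [ContinuousLinearMap.coe_comp', Function.comp_apply]
    exact hTid (T x) (hdec x).1
  · rw [hclos]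
    apply Set.Subset.antisymm
    · rintro _ ⟨x, rfl⟩; exact (hdec x).1
    · intro h hh; exact ⟨h, hTid h hh⟩
  · intro h hh
    exact hTid h (hclos ▸ hh)
  · intro h hh
    have hh' : A h = 0 ∧ B h = 0 := by
      simpa only [Submodule.mem_inf, LinearMap.mem_ker, ContinuousLinearMap.coe_coe] using hh
    exact hT0 h hh'.1 hh'.2
end

section
/- Let C_A and C_B be the operators associated with the pair (A,B). Then the closure in H × K of the subspace L(A,B) = {(A f, B f) : f ∈ E} equals {(C_A φ, C_B φ) : φ ∈ E}; moreover, for every φ ∈ (ker C_A)⊥ and ψ ∈ ker C_A one has ⟨C_B φ, C_B ψ⟩ = 0, so that the multivalued part of the closure is C_B(ker C_A) and the orthogonal operator part of the closure is {(C_A φ, C_B φ) : φ ∈ (ker C_A)⊥}. -/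
set_option maxHeartbeats 1000000


open ContinuousLinearMap
open scoped InnerProductSpace

/-- Let `S = (A*A + B*B)^{1/2}` be the positive square root and let `C_A`,
`C_B` be the unique contractions with `A = C_A ∘ S`, `B = C_B ∘ S` vanishing on
`ker A ∩ ker B`. Then the closure of `L(A,B) = {(A f, B f) : f ∈ E}` in `H × K` equals
`{(C_A φ, C_B φ) : φ ∈ E}`; moreover for every `φ ∈ (ker C_A)ᗮ` and `ψ ∈ ker C_A` one has
`⟪C_B φ, C_B ψ⟫ = 0`, the multivalued part of the closure is `C_B (ker C_A)`, and the
orthogonal operator part of the closure (the elements of the closure whose second component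
is orthogonal to the multivalued part) is `{(C_A φ, C_B φ) : φ ∈ (ker C_A)ᗮ}`. -/
theorem closure_LAB_eq_LCACB
    {E H K : Type}
    [NormedAddCommGroup E] [InnerProductSpace ℂ E] [CompleteSpace E]
    [NormedAddCommGroup H] [InnerProductSpace ℂ H] [CompleteSpace H]
    [NormedAddCommGroup K] [InnerProductSpace ℂ K] [CompleteSpace K]
    (A : E →L[ℂ] H) (B : E →L[ℂ] K)
    (S : E →L[ℂ] E) (hSpos : S.IsPositive)
    (hSsq : S ∘L S = adjoint A ∘L A + adjoint B ∘L B)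
    (CA : E →L[ℂ] H) (CB : E →L[ℂ] K)
    (hCAnorm : ‖CA‖ ≤ 1) (hCBnorm : ‖CB‖ ≤ 1)
    (hA : A = CA ∘L S) (hB : B = CB ∘L S)
    (hker : ∀ f ∈ LinearMap.ker (A : E →ₗ[ℂ] H) ⊓ LinearMap.ker (B : E →ₗ[ℂ] K), CA f = 0 ∧ CB f = 0) :
    closure (Set.range fun f : E => ((A f, B f) : H × K)) =
      Set.range (fun φ : E => ((CA φ, CB φ) : H × K)) ∧
    (∀ φ ∈ (LinearMap.ker (CA : E →ₗ[ℂ] H))ᗮ, ∀ ψ ∈ LinearMap.ker (CA : E →ₗ[ℂ] H), ⟪CB φ, CB ψ⟫_ℂ = 0) ∧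
    {k : K | ((0 : H), k) ∈ closure (Set.range fun f : E => ((A f, B f) : H × K))} =
      ⇑CB '' (LinearMap.ker (CA : E →ₗ[ℂ] H) : Set E) ∧
    {p : H × K |
        p ∈ closure (Set.range fun f : E => ((A f, B f) : H × K)) ∧
        ∀ k ∈ {k : K |
            ((0 : H), k) ∈ closure (Set.range fun f : E => ((A f, B f) : H × K))},
          ⟪p.2, k⟫_ℂ = 0} =
      {p : H × K | ∃ φ ∈ (LinearMap.ker (CA : E →ₗ[ℂ] H))ᗮ, p = (CA φ, CB φ)} := by
  classical
  have hSsa : IsSelfAdjoint S := hSpos.isSelfAdjoint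
  have hSinner : ∀ x y : E, ⟪S x, y⟫_ℂ = ⟪x, S y⟫_ℂ := by
    intro x y
    conv_rhs => rw [← hSsa.adjoint_eq]
    exact (adjoint_inner_right S x y).symm
  -- ker S ⊆ ker CA ∩ ker CB
  have hkerS : ∀ f : E, S f = 0 → CA f = 0 ∧ CB f = 0 := by
    intro f hf
    refine hker f ?_
    constructor <;> simp [hA, hB, LinearMap.mem_ker, ContinuousLinearMap.comp_apply, hf]
  set V : Submodule ℂ E := (LinearMap.ker (S : E →ₗ[ℂ] E))ᗮ with hVdef
  -- closure of range S is V
  have hro : (LinearMap.range (S : E →ₗ[ℂ] E))ᗮ = LinearMap.ker (S : E →ₗ[ℂ] E) := by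
    ext x
    simp only [Submodule.mem_orthogonal, LinearMap.mem_range, LinearMap.mem_ker,
      forall_exists_index]
    constructor
    · intro h
      have h2 : ∀ f : E, ⟪f, S x⟫_ℂ = 0 := by
        intro f
        rw [← hSinner]
        exact h (S f) f rfl
      have := h2 (S x)
      exact inner_self_eq_zero.mp this
    · intro hx u f hf
      rw [← hf, ContinuousLinearMap.coe_coe, hSinner, (by exact hx : S x = 0), inner_zero_right]
  have hclos : closure ((LinearMap.range (S : E →ₗ[ℂ] E) : Submodule ℂ E) : Set E) = (V : Set E) := by
    rw [← Submodule.topologicalClosure_coe, ← Submodule.orthogonal_orthogonal_eq_closure, hro]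
  -- the operator D
  set D : E →L[ℂ] E := adjoint CA ∘L CA + adjoint CB ∘L CB - 1 with hDdef
  have hDinner : ∀ x y : E, ⟪D x, y⟫_ℂ = ⟪CA x, CA y⟫_ℂ + ⟪CB x, CB y⟫_ℂ - ⟪x, y⟫_ℂ := by
    intro x y
    simp [hDdef, inner_sub_left, inner_add_left, adjoint_inner_left]
  have hrange_id : ∀ f g : E, ⟪CA (S f), CA (S g)⟫_ℂ + ⟪CB (S f), CB (S g)⟫_ℂ
      = ⟪S f, S g⟫_ℂ := by
    intro f g
    have h1 : ⟪f, (S ∘L S) g⟫_ℂ = ⟪f, (adjoint A ∘L A + adjoint B ∘L B) g⟫_ℂ := by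
      rw [hSsq]
    have h2 : ⟪f, (S ∘L S) g⟫_ℂ = ⟪S f, S g⟫_ℂ := by
      simp only [ContinuousLinearMap.comp_apply]
      rw [← hSinner]
    have h3 : ⟪f, (adjoint A ∘L A + adjoint B ∘L B) g⟫_ℂ = ⟪A f, A g⟫_ℂ + ⟪B f, B g⟫_ℂ := by
      simp [inner_add_right, adjoint_inner_right]
    have h4 : ⟪A f, A g⟫_ℂ + ⟪B f, B g⟫_ℂ = ⟪S f, S g⟫_ℂ := by
      rw [← h3, ← h1, h2]
    simpa [hA, hB] using h4
  have hSDS : ∀ f : E, D (S f) ∈ LinearMap.ker (S : E →ₗ[ℂ] E) := by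
    intro f
    have h0 : ∀ y : E, ⟪S (D (S f)), y⟫_ℂ = 0 := by
      intro y
      rw [hSinner, hDinner, hrange_id f y]
      ring
    have := h0 (S (D (S f)))
    exact LinearMap.mem_ker.mpr (inner_self_eq_zero.mp this)
  have hDmem : ∀ x ∈ (V : Set E), D x ∈ LinearMap.ker (S : E →ₗ[ℂ] E) := by
    intro x hx
    have hmt : Set.MapsTo D ((LinearMap.range (S : E →ₗ[ℂ] E) : Submodule ℂ E) : Set E)
        ((LinearMap.ker (S : E →ₗ[ℂ] E) : Submodule ℂ E) : Set E) := by
      rintro u ⟨f, rfl⟩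
      exact hSDS f
    have hcl := hmt.closure D.continuous
    rw [hclos, (ContinuousLinearMap.isClosed_ker S).closure_eq] at hcl
    exact hcl hx
  -- key identity on V
  have hVid : ∀ x ∈ V, ∀ y ∈ V, ⟪CA x, CA y⟫_ℂ + ⟪CB x, CB y⟫_ℂ = ⟪x, y⟫_ℂ := by
    intro x hx y hy
    have h0 : ⟪D x, y⟫_ℂ = 0 :=
      (Submodule.mem_orthogonal _ y).mp hy (D x) (hDmem x hx)
    rw [hDinner] at h0
    linear_combination h0
  have hVnorm : ∀ x ∈ V, ‖x‖ ^ 2 = ‖CA x‖ ^ 2 + ‖CB x‖ ^ 2 := by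
    intro x hx
    have h := hVid x hx x hx
    rw [inner_self_eq_norm_sq_to_K, inner_self_eq_norm_sq_to_K, inner_self_eq_norm_sq_to_K] at h
    exact_mod_cast h.symm
  -- the pair operator
  set T : E →L[ℂ] H × K := CA.prod CB with hTdef
  have hTapp : ∀ x : E, T x = (CA x, CB x) := fun x => rfl
  -- image of V under T is closed
  haveI : CompleteSpace V := (Submodule.isClosed_orthogonal _).completeSpace_coe
  set g : V →L[ℂ] H × K := T.comp V.subtypeL with hgdef
  have hbound : ∀ x : V, ‖x‖ ≤ (NNReal.sqrt 2 : ℝ) * ‖g x‖ := by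
    intro x
    have h1 : ‖(x : E)‖ ^ 2 = ‖CA x‖ ^ 2 + ‖CB x‖ ^ 2 := hVnorm x x.2
    have h2 : ‖CA (x : E)‖ ≤ ‖T (x : E)‖ := by
      rw [hTapp]; exact norm_fst_le (CA (x : E), CB (x : E))
    have h3 : ‖CB (x : E)‖ ≤ ‖T (x : E)‖ := by
      rw [hTapp]; exact norm_snd_le (CA (x : E), CB (x : E))
    have h4 : ‖(x : E)‖ ^ 2 ≤ 2 * ‖T (x : E)‖ ^ 2 := by
      rw [h1]
      nlinarith [norm_nonneg (CA (x : E)), norm_nonneg (CB (x : E)), norm_nonneg (T (x : E))]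
    have h5 : ‖(x : E)‖ ≤ Real.sqrt 2 * ‖T (x : E)‖ := by
      calc ‖(x : E)‖ = Real.sqrt (‖(x : E)‖ ^ 2) := by
              rw [Real.sqrt_sq (norm_nonneg _)]
        _ ≤ Real.sqrt (2 * ‖T (x : E)‖ ^ 2) := Real.sqrt_le_sqrt h4
        _ = Real.sqrt 2 * ‖T (x : E)‖ := by
              rw [Real.sqrt_mul (by norm_num), Real.sqrt_sq (norm_nonneg _)]
    have hg : g x = T (x : E) := rfl
    rw [hg]
    simpa [Real.coe_sqrt] using h5
  have hanti : AntilipschitzWith (NNReal.sqrt 2) g :=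
    ContinuousLinearMap.antilipschitz_of_bound g (by
      intro x
      simpa [Real.coe_sqrt] using hbound x)
  have hclosedTV : IsClosed (T '' (V : Set E)) := by
    have h1 : IsClosed (Set.range g) :=
      hanti.isClosed_range g.uniformContinuous
    have h2 : Set.range g = T '' (V : Set E) := by
      ext p
      constructor
      · rintro ⟨x, rfl⟩
        exact ⟨x, x.2, rfl⟩
      · rintro ⟨x, hx, rfl⟩
        exact ⟨⟨x, hx⟩, rfl⟩
    rwa [h2] at h1
  -- range of (CA, CB) equals T '' V
  have hkerSsubCA : (LinearMap.ker (S : E →ₗ[ℂ] E) : Set E) ⊆ (LinearMap.ker (CA : E →ₗ[ℂ] H) : Set E) := by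
    intro f hf
    exact LinearMap.mem_ker.mpr (hkerS f (LinearMap.mem_ker.mp hf)).1
  have hrangeT : Set.range (fun φ : E => ((CA φ, CB φ) : H × K)) = T '' (V : Set E) := by
    ext p
    constructor
    · rintro ⟨φ, rfl⟩
      have hq : φ - (Submodule.orthogonalProjection (LinearMap.ker (S : E →ₗ[ℂ] E)) φ : E) ∈ V :=
        Submodule.sub_starProjection_mem_orthogonal φ
      have hp0 : ((Submodule.orthogonalProjection (LinearMap.ker (S : E →ₗ[ℂ] E)) φ : E)) ∈ LinearMap.ker (S : E →ₗ[ℂ] E) :=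
        (Submodule.orthogonalProjection (LinearMap.ker (S : E →ₗ[ℂ] E)) φ).2
      obtain ⟨hCA0, hCB0⟩ := hkerS _ (LinearMap.mem_ker.mp hp0)
      refine ⟨φ - (Submodule.orthogonalProjection (LinearMap.ker (S : E →ₗ[ℂ] E)) φ : E), hq, ?_⟩
      rw [hTapp]
      simp [map_sub, hCA0, hCB0]
      exact ⟨hCA0, hCB0⟩
    · rintro ⟨x, hx, rfl⟩
      exact ⟨x, rfl⟩
  -- Part 1
  have hLset : (Set.range fun f : E => ((A f, B f) : H × K))
      = T '' ((LinearMap.range (S : E →ₗ[ℂ] E) : Submodule ℂ E) : Set E) := by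
    ext p
    constructor
    · rintro ⟨f, rfl⟩
      exact ⟨S f, ⟨f, rfl⟩, by rw [hTapp]; simp [hA, hB]⟩
    · rintro ⟨x, ⟨f, rfl⟩, rfl⟩
      exact ⟨f, by rw [hTapp]; simp [hA, hB]⟩
  have hpart1 : closure (Set.range fun f : E => ((A f, B f) : H × K))
      = Set.range (fun φ : E => ((CA φ, CB φ) : H × K)) := by
    rw [hLset, hrangeT]
    apply le_antisymm
    · apply closure_minimal _ hclosedTV
      apply Set.image_mono
      rw [← hclos]
      exact subset_closure
    · calc T '' (V : Set E) = T '' closure ((LinearMap.range (S : E →ₗ[ℂ] E) : Submodule ℂ E) : Set E) := by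
            rw [hclos]
      _ ⊆ closure (T '' ((LinearMap.range (S : E →ₗ[ℂ] E) : Submodule ℂ E) : Set E)) :=
            image_closure_subset_closure_image T.continuous
  -- Part 2
  have hCAorthV : ((LinearMap.ker (CA : E →ₗ[ℂ] H))ᗮ : Set E) ⊆ (V : Set E) := by
    have := Submodule.orthogonal_le (le_of_eq rfl : LinearMap.ker (S : E →ₗ[ℂ] E) ≤ LinearMap.ker (S : E →ₗ[ℂ] E))
    exact Submodule.orthogonal_le (fun x hx => hkerSsubCA hx)
  have hpart2 : ∀ φ ∈ (LinearMap.ker (CA : E →ₗ[ℂ] H))ᗮ, ∀ ψ ∈ LinearMap.ker (CA : E →ₗ[ℂ] H), ⟪CB φ, CB ψ⟫_ℂ = 0 := by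
    intro φ hφ ψ hψ
    set ψ₀ : E := (Submodule.orthogonalProjection (LinearMap.ker (S : E →ₗ[ℂ] E)) ψ : E) with hψ₀def
    have hψ₀ : ψ₀ ∈ LinearMap.ker (S : E →ₗ[ℂ] E) := (Submodule.orthogonalProjection (LinearMap.ker (S : E →ₗ[ℂ] E)) ψ).2
    have hψ₁ : ψ - ψ₀ ∈ V := Submodule.sub_starProjection_mem_orthogonal ψ
    obtain ⟨hCA0, hCB0⟩ := hkerS ψ₀ (LinearMap.mem_ker.mp hψ₀)
    have hφV : φ ∈ V := hCAorthV hφ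
    have hid := hVid φ hφV (ψ - ψ₀) hψ₁
    have hCAψ₁ : CA (ψ - ψ₀) = 0 := by
      rw [map_sub, (by exact LinearMap.mem_ker.mp hψ : CA ψ = 0), hCA0, sub_zero]
    have hinnerφψ : ⟪φ, ψ⟫_ℂ = 0 := by
      rw [inner_eq_zero_symm]
      exact (Submodule.mem_orthogonal _ φ).mp hφ ψ hψ
    have hinnerφψ₀ : ⟪φ, ψ₀⟫_ℂ = 0 := by
      rw [inner_eq_zero_symm]
      exact (Submodule.mem_orthogonal _ φ).mp hφ ψ₀ (hkerSsubCA hψ₀)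
    have hinner1 : ⟪φ, ψ - ψ₀⟫_ℂ = 0 := by
      rw [inner_sub_right, hinnerφψ, hinnerφψ₀, sub_zero]
    rw [hCAψ₁, inner_zero_right, zero_add, hinner1] at hid
    have hCBψ : CB ψ = CB (ψ - ψ₀) := by
      rw [map_sub, hCB0, sub_zero]
    rw [hCBψ]
    exact hid
  -- Part 3
  have hpart3 : {k : K | ((0 : H), k) ∈ closure (Set.range fun f : E => ((A f, B f) : H × K))}
      = ⇑CB '' (LinearMap.ker (CA : E →ₗ[ℂ] H) : Set E) := by
    ext k
    simp only [Set.mem_setOf_eq, hpart1, Set.mem_range, Set.mem_image, SetLike.mem_coe,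
      LinearMap.mem_ker]
    constructor
    · rintro ⟨φ, hφ⟩
      have h1 : CA φ = 0 := (Prod.mk.injEq _ _ _ _ |>.mp hφ).1
      have h2 : CB φ = k := (Prod.mk.injEq _ _ _ _ |>.mp hφ).2
      exact ⟨φ, h1, h2⟩
    · rintro ⟨φ, hφ, rfl⟩
      exact ⟨φ, by rw [(by exact hφ : CA φ = 0)]⟩
  refine ⟨hpart1, hpart2, hpart3, ?_⟩
  -- Part 4
  ext p
  simp only [Set.mem_setOf_eq]
  constructor
  · rintro ⟨hp, hperp⟩
    rw [hpart1] at hp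
    obtain ⟨φ, hφ⟩ := hp
    set φ₀ : E := (Submodule.orthogonalProjection (LinearMap.ker (CA : E →ₗ[ℂ] H)) φ : E) with hφ₀def
    have hφ₀ : φ₀ ∈ LinearMap.ker (CA : E →ₗ[ℂ] H) := (Submodule.orthogonalProjection (LinearMap.ker (CA : E →ₗ[ℂ] H)) φ).2
    have hφ₁ : φ - φ₀ ∈ (LinearMap.ker (CA : E →ₗ[ℂ] H))ᗮ := Submodule.sub_starProjection_mem_orthogonal φ
    have hk : ((0 : H), CB φ₀)
        ∈ closure (Set.range fun f : E => ((A f, B f) : H × K)) := by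
      rw [hpart1]
      exact ⟨φ₀, by show (CA φ₀, CB φ₀) = (0, CB φ₀); rw [(by exact LinearMap.mem_ker.mp hφ₀ : CA φ₀ = 0)]⟩
    have h0 : ⟪p.2, CB φ₀⟫_ℂ = 0 := hperp _ hk
    have hp2 : p.2 = CB φ := by rw [← hφ]
    have h1 : ⟪CB (φ - φ₀), CB φ₀⟫_ℂ = 0 := hpart2 _ hφ₁ _ hφ₀
    have h2 : ⟪CB φ₀, CB φ₀⟫_ℂ = 0 := by
      have h3 : ⟪CB φ, CB φ₀⟫_ℂ = ⟪CB (φ - φ₀), CB φ₀⟫_ℂ + ⟪CB φ₀, CB φ₀⟫_ℂ := by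
        rw [map_sub, inner_sub_left]
        ring
      rw [hp2] at h0
      rw [h0, h1] at h3
      linear_combination -h3
    have hCBφ₀ : CB φ₀ = 0 := inner_self_eq_zero.mp h2
    refine ⟨φ - φ₀, hφ₁, ?_⟩
    rw [← hφ]
    rw [map_sub, map_sub, (by exact LinearMap.mem_ker.mp hφ₀ : CA φ₀ = 0), hCBφ₀, sub_zero, sub_zero]
  · rintro ⟨φ, hφ, rfl⟩
    constructor
    · rw [hpart1]
      exact ⟨φ, rfl⟩
    · intro k hk
      simp only [Set.mem_setOf_eq, hpart1, Set.mem_range] at hk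
      obtain ⟨ψ, hψ⟩ := hk
      have h1 : CA ψ = 0 := (Prod.mk.injEq _ _ _ _ |>.mp hψ).1
      have h2 : CB ψ = k := (Prod.mk.injEq _ _ _ _ |>.mp hψ).2
      rw [← h2]
      exact hpart2 φ hφ ψ (LinearMap.mem_ker.mpr h1)
end

section
/- The following equivalences hold: (a) the multivalued part of the closure of L(A,B) is trivial (i.e., L(A,B) is regular) if and only if D(A,B) is dense in K; (b) there exists c ≥ 0 with ‖B f‖ ≤ c ‖A f‖ for all f ∈ E (i.e., L(A,B) is a bounded operator) if and only if D(A,B) = K, equivalently ran B* ⊆ ran A*; (c) L(A,B) is an everywhere defined bounded operator from H to K if and only if ran B* ⊆ ran A* and ran A = H. -/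
open ContinuousLinearMap

section Aux

variable {E H K : Type}
    [NormedAddCommGroup E] [InnerProductSpace ℂ E] [CompleteSpace E]
    [NormedAddCommGroup H] [InnerProductSpace ℂ H] [CompleteSpace H]
    [NormedAddCommGroup K] [InnerProductSpace ℂ K] [CompleteSpace K]

local notation "⟪" x ", " y "⟫" => @inner ℂ _ _ x y

/-- Douglas, easy direction: a norm bound gives range inclusion of adjoints. -/
lemma aux_mem_range_adjoint_of_bound (A : E →L[ℂ] H) (B : E →L[ℂ] K) {c : ℝ}
    (hc : ∀ f, ‖B f‖ ≤ c * ‖A f‖) (k : K) :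
    adjoint B k ∈ Set.range ⇑(adjoint A) := by
  have hBA : ∀ f g : E, A f = A g → B f = B g := by
    intro f g hfg
    have h1 : ‖B f - B g‖ ≤ c * ‖A f - A g‖ := by
      simpa [map_sub] using hc (f - g)
    rw [hfg, sub_self, norm_zero, mul_zero] at h1
    have h2 := norm_nonneg (B f - B g)
    have : ‖B f - B g‖ = 0 := le_antisymm h1 h2
    simpa [sub_eq_zero] using norm_eq_zero.mp this
  set p : Submodule ℂ H := LinearMap.range (A : E →ₗ[ℂ] H) with hp
  have hsel : ∀ y : p, ∃ f : E, A f = (y : H) := fun y => LinearMap.mem_range.mp y.2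
  choose sel hsel' using hsel
  have hselA : ∀ (y : p) (f : E), A f = (y : H) → B (sel y) = B f := by
    intro y f hf
    exact hBA _ _ (by rw [hsel' y, hf])
  set g0 : p →ₗ[ℂ] ℂ :=
    { toFun := fun y => ⟪k, B (sel y)⟫
      map_add' := by
        intro y z
        show ⟪k, B (sel (y + z))⟫ = ⟪k, B (sel y)⟫ + ⟪k, B (sel z)⟫
        have h1 : B (sel (y + z)) = B (sel y + sel z) := by
          apply hBA
          rw [hsel', map_add, hsel', hsel']; rfl
        rw [h1, map_add, inner_add_right]
      map_smul' := by
        intro a y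
        show ⟪k, B (sel (a • y))⟫ = a * ⟪k, B (sel y)⟫
        have h1 : B (sel (a • y)) = B (a • sel y) := by
          apply hBA
          rw [hsel', map_smul, hsel']; rfl
        rw [h1, map_smul, inner_smul_right] } with hg0def
  have hg0 : ∀ y : p, g0 y = ⟪k, B (sel y)⟫ := fun y => rfl
  have hbound : ∀ y : p, ‖g0 y‖ ≤ (‖k‖ * c) * ‖y‖ := by
    intro y
    have hy : ‖A (sel y)‖ = ‖y‖ := by rw [hsel' y]; rfl
    rw [hg0]
    calc ‖⟪k, B (sel y)⟫‖ ≤ ‖k‖ * ‖B (sel y)‖ := norm_inner_le_norm _ _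
      _ ≤ ‖k‖ * (c * ‖A (sel y)‖) :=
        mul_le_mul_of_nonneg_left (hc _) (norm_nonneg k)
      _ = (‖k‖ * c) * ‖y‖ := by rw [hy]; ring
  obtain ⟨g', hg', -⟩ :=
    exists_extension_norm_eq p (LinearMap.mkContinuous g0 (‖k‖ * c) hbound)
  set x : H := (InnerProductSpace.toDual ℂ H).symm g' with hx
  have hxg : ∀ h : H, ⟪x, h⟫ = g' h := fun h =>
    InnerProductSpace.toDual_symm_apply
  refine ⟨x, ?_⟩
  apply ext_inner_right ℂ
  intro f
  rw [adjoint_inner_left, adjoint_inner_left]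
  have hmem : A f ∈ p := LinearMap.mem_range.mpr ⟨f, rfl⟩
  have h1 : ⟪x, A f⟫ = g' (A f) := hxg (A f)
  have h2 : g' (A f) = LinearMap.mkContinuous g0 (‖k‖ * c) hbound ⟨A f, hmem⟩ :=
    hg' ⟨A f, hmem⟩
  have h3 : LinearMap.mkContinuous g0 (‖k‖ * c) hbound (⟨A f, hmem⟩ : p) = ⟪k, B f⟫ := by
    rw [LinearMap.mkContinuous_apply, hg0]
    congr 1
    exact hselA _ f rfl
  rw [h1, h2, h3]


/-- Douglas, hard direction: range inclusion of adjoints gives a norm bound. -/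
lemma aux_bound_of_range_incl (A : E →L[ℂ] H) (B : E →L[ℂ] K)
    (h : ∀ k : K, adjoint B k ∈ Set.range ⇑(adjoint A)) :
    ∃ c : ℝ, 0 ≤ c ∧ ∀ f : E, ‖B f‖ ≤ c * ‖A f‖ := by
  classical
  set N : Submodule ℂ H := LinearMap.ker (adjoint A : H →ₗ[ℂ] E) with hN
  haveI : CompleteSpace N := (ContinuousLinearMap.isClosed_ker (adjoint A)).completeSpace_coe
  set S : Submodule ℂ H := Nᗮ with hS
  haveI : CompleteSpace S := (Submodule.isClosed_orthogonal N).completeSpace_coe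
  have hSbot : Sᗮ = N := Submodule.orthogonal_orthogonal N
  -- uniqueness within S
  have huniq : ∀ x y : H, x ∈ S → y ∈ S → adjoint A x = adjoint A y → x = y := by
    intro x y hx hy hxy
    have h1 : x - y ∈ S := Submodule.sub_mem S hx hy
    have h2 : x - y ∈ N := by
      rw [hN, LinearMap.mem_ker, map_sub, ContinuousLinearMap.coe_coe, hxy, sub_self]
    have h3 : (inner ℂ (x - y) (x - y) : ℂ) = 0 := (Submodule.mem_orthogonal S (x - y)).mp
      (by rw [hSbot]; exact h2) (x - y) h1
    exact sub_eq_zero.mp (inner_self_eq_zero.mp h3)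
  -- projection fixes adjoint values
  have hproj : ∀ x : H, adjoint A ((Submodule.orthogonalProjectionOnto S x : H)) = adjoint A x := by
    intro x
    have h1 : x - (Submodule.orthogonalProjectionOnto S x : H) ∈ Sᗮ :=
      Submodule.sub_starProjection_mem_orthogonal (K := S) x
    rw [hSbot] at h1
    have h2 : adjoint A (x - (Submodule.orthogonalProjectionOnto S x : H)) = 0 := LinearMap.mem_ker.mp h1
    rw [map_sub, sub_eq_zero] at h2
    exact h2.symm
  set T0 : K → H := fun k => (Submodule.orthogonalProjectionOnto S (h k).choose : H) with hT0
  have hT0S : ∀ k, T0 k ∈ S := fun k => SetLike.coe_mem _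
  have hT0A : ∀ k, adjoint A (T0 k) = adjoint B k := by
    intro k
    rw [hT0]
    simp only []
    rw [hproj, (h k).choose_spec]
  have hT0uniq : ∀ (k : K) (x : H), x ∈ S → adjoint A x = adjoint B k → x = T0 k := by
    intro k x hx hxk
    exact huniq x (T0 k) hx (hT0S k) (by rw [hxk, hT0A])
  set T : K →ₗ[ℂ] H :=
    { toFun := T0
      map_add' := by
        intro k l
        refine (hT0uniq (k + l) (T0 k + T0 l) (Submodule.add_mem S (hT0S k) (hT0S l)) ?_).symm
        rw [map_add, hT0A, hT0A, map_add]
      map_smul' := by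
        intro a k
        refine (hT0uniq (a • k) (a • T0 k) (Submodule.smul_mem S a (hT0S k)) ?_).symm
        rw [map_smul, hT0A, map_smul] } with hTdef
  have hTapp : ∀ k, T k = T0 k := fun k => rfl
  have hgraph : (T.graph : Set (K × H)) =
      {q : K × H | q.2 ∈ (S : Set H)} ∩ {q : K × H | adjoint A q.2 = adjoint B q.1} := by
    ext q
    constructor
    · intro hq
      have : q.2 = T q.1 := (LinearMap.mem_graph_iff T q).mp hq
      refine ⟨?_, ?_⟩
      · rw [Set.mem_setOf_eq, this, hTapp]; exact hT0S q.1
      · rw [Set.mem_setOf_eq, this, hTapp, hT0A]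
    · rintro ⟨h1, h2⟩
      exact (LinearMap.mem_graph_iff T q).mpr (hT0uniq q.1 q.2 h1 h2)
  have hclosed : IsClosed (T.graph : Set (K × H)) := by
    rw [hgraph]
    refine IsClosed.inter ?_ ?_
    · exact (Submodule.isClosed_orthogonal N).preimage continuous_snd
    · exact isClosed_eq ((adjoint A).continuous.comp continuous_snd)
        ((adjoint B).continuous.comp continuous_fst)
  have hTcont : Continuous T := T.continuous_of_isClosed_graph hclosed
  set Tc : K →L[ℂ] H := ⟨T, hTcont⟩ with hTc
  have hadj : adjoint B = (adjoint A).comp Tc := by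
    ext k
    rw [comp_apply]
    exact (hT0A k).symm
  have hB : B = (adjoint Tc).comp A := by
    have h1 : B = adjoint (adjoint B) := (adjoint_adjoint B).symm
    rw [h1, hadj, adjoint_comp, adjoint_adjoint]
  refine ⟨‖adjoint Tc‖, norm_nonneg _, ?_⟩
  intro f
  calc ‖B f‖ = ‖adjoint Tc (A f)‖ := by rw [hB]; rfl
    _ ≤ ‖adjoint Tc‖ * ‖A f‖ := le_opNorm _ _


/-- The multivalued part of the closure of `L(A,B)` is the orthogonal complement of
`D(A,B)`. -/
lemma aux_mul_part_eq (A : E →L[ℂ] H) (B : E →L[ℂ] K) :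
    {k : K | ((0 : H), k) ∈ closure (Set.range fun f : E => ((A f, B f) : H × K))} =
      (((Submodule.comap ((adjoint B : K →ₗ[ℂ] E))
        (LinearMap.range ((adjoint A : H →ₗ[ℂ] E))))ᗮ : Submodule ℂ K) : Set K) := by
  classical
  set D : Submodule ℂ K := Submodule.comap ((adjoint B : K →ₗ[ℂ] E))
      (LinearMap.range ((adjoint A : H →ₗ[ℂ] E))) with hD
  have hDmem : ∀ d : K, d ∈ D ↔ ∃ x : H, adjoint A x = adjoint B d := by
    intro d
    simp [hD, LinearMap.mem_range]
  set e : WithLp 2 (H × K) ≃L[ℂ] H × K := WithLp.prodContinuousLinearEquiv 2 ℂ H K with he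
  set Tl : E →L[ℂ] WithLp 2 (H × K) :=
    (e.symm : (H × K) →L[ℂ] WithLp 2 (H × K)).comp (A.prod B) with hTl
  set L : Submodule ℂ (WithLp 2 (H × K)) := LinearMap.range (Tl : E →ₗ[ℂ] WithLp 2 (H × K)) with hL
  have hTlapp : ∀ f : E, Tl f = e.symm (A f, B f) := fun f => rfl
  have hTlfst : ∀ f : E, (Tl f).fst = A f := by
    intro f; rw [hTlapp]; simp [he]
  have hTlsnd : ∀ f : E, (Tl f).snd = B f := by
    intro f; rw [hTlapp]; simp [he]
  -- description of the orthogonal complement of L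
  have hLorth : ∀ v : WithLp 2 (H × K), v ∈ Lᗮ → v.snd ∈ D := by
    intro v hv
    have h1 : ∀ f : E, ⟪Tl f, v⟫ = 0 := by
      intro f
      exact (Submodule.mem_orthogonal L v).mp hv (Tl f) (LinearMap.mem_range.mpr ⟨f, rfl⟩)
    have h2 : adjoint A v.fst + adjoint B v.snd = 0 := by
      apply ext_inner_left ℂ
      intro f
      have h3 := h1 f
      rw [WithLp.prod_inner_apply] at h3
      simp only [WithLp.ofLp_fst, WithLp.ofLp_snd] at h3
      rw [hTlfst, hTlsnd] at h3
      rw [inner_add_right, adjoint_inner_right, adjoint_inner_right, inner_zero_right]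
      exact h3
    rw [hDmem]
    exact ⟨-v.fst, by rw [map_neg, ← neg_eq_iff_eq_neg.mpr (eq_neg_of_add_eq_zero_left h2)]⟩
  -- the closure as a double orthogonal complement
  have hclos : closure (Set.range fun f : E => ((A f, B f) : H × K)) = e '' (Lᗮᗮ : Set _) := by
    have h1 : (Set.range fun f : E => ((A f, B f) : H × K)) = e '' (L : Set _) := by
      ext y
      constructor
      · rintro ⟨f, rfl⟩
        exact ⟨Tl f, LinearMap.mem_range.mpr ⟨f, rfl⟩, by rw [hTlapp]; simp⟩
      · rintro ⟨u, hu, rfl⟩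
        obtain ⟨f, rfl⟩ := LinearMap.mem_range.mp hu
        exact ⟨f, by rw [ContinuousLinearMap.coe_coe, hTlapp]; simp⟩
    have hcoe : ⇑e.toHomeomorph = ⇑e := rfl
    have h2 := (e.toHomeomorph.image_closure (L : Set _)).symm
    rw [hcoe] at h2
    rw [h1, h2, ← Submodule.topologicalClosure_coe, ← Submodule.orthogonal_orthogonal_eq_closure]
  ext k
  set w : WithLp 2 (H × K) := (WithLp.equiv 2 (H × K)).symm ((0 : H), k) with hw
  have hwfst : w.fst = (0 : H) := rfl
  have hwsnd : w.snd = k := rfl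
  have hmem : ((0 : H), k) ∈ closure (Set.range fun f : E => ((A f, B f) : H × K)) ↔
      w ∈ Lᗮᗮ := by
    rw [hclos]
    constructor
    · rintro ⟨u, hu, huk⟩
      have : u = w := by
        rw [hw, ← huk]; rfl
      rwa [← this]
    · intro hwm
      exact ⟨w, hwm, by rw [hw]; simp [he]⟩
  rw [Set.mem_setOf_eq, hmem, SetLike.mem_coe]
  constructor
  · intro hwm
    rw [Submodule.mem_orthogonal]
    intro d hd
    obtain ⟨x, hx⟩ := (hDmem d).mp hd
    set v : WithLp 2 (H × K) := (WithLp.equiv 2 (H × K)).symm (-x, d) with hv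
    have hvfst : v.fst = -x := rfl
    have hvsnd : v.snd = d := rfl
    have hvL : v ∈ Lᗮ := by
      rw [Submodule.mem_orthogonal]
      rintro u hu
      obtain ⟨f, rfl⟩ := LinearMap.mem_range.mp hu
      rw [WithLp.prod_inner_apply]
      simp only [WithLp.ofLp_fst, WithLp.ofLp_snd, ContinuousLinearMap.coe_coe]
      rw [hTlfst, hTlsnd, hvfst, hvsnd, inner_neg_right,
        ← adjoint_inner_right, ← adjoint_inner_right, hx]
      ring
    have := (Submodule.mem_orthogonal Lᗮ w).mp hwm v hvL
    rw [WithLp.prod_inner_apply] at this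
    simp only [WithLp.ofLp_fst, WithLp.ofLp_snd] at this
    rw [hvfst, hvsnd, hwfst, hwsnd, inner_zero_right,
      zero_add] at this
    exact this
  · intro hk
    rw [Submodule.mem_orthogonal]
    intro v hv
    rw [WithLp.prod_inner_apply]
    simp only [WithLp.ofLp_fst, WithLp.ofLp_snd]
    rw [hwfst, hwsnd, inner_zero_right, zero_add]
    exact (Submodule.mem_orthogonal D k).mp hk v.snd (hLorth v hv)


end Aux

/-- With `D(A,B) = {k ∈ K : B* k ∈ ran A*}`: (a) the multivalued part of
the closure of `L(A,B)` is trivial (`L(A,B)` is regular) iff `D(A,B)` is dense in `K`;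
(b) there is `c ≥ 0` with `‖B f‖ ≤ c ‖A f‖` for all `f` (`L(A,B)` is a bounded operator) iff
`D(A,B) = K`, equivalently `ran B* ⊆ ran A*`; (c) `L(A,B)` is an everywhere defined bounded
operator from `H` to `K` (i.e. its domain `ran A` is all of `H` and it is bounded) iff
`ran B* ⊆ ran A*` and `ran A = H`. -/
theorem regular_bounded_everywhere_characterizations
    {E H K : Type}
    [NormedAddCommGroup E] [InnerProductSpace ℂ E] [CompleteSpace E]
    [NormedAddCommGroup H] [InnerProductSpace ℂ H] [CompleteSpace H]
    [NormedAddCommGroup K] [InnerProductSpace ℂ K] [CompleteSpace K]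
    (A : E →L[ℂ] H) (B : E →L[ℂ] K) :
    ({k : K | ((0 : H), k) ∈ closure (Set.range fun f : E => ((A f, B f) : H × K))} = {0} ↔
      Dense {k : K | adjoint B k ∈ Set.range ⇑(adjoint A)}) ∧
    ((∃ c : ℝ, 0 ≤ c ∧ ∀ f : E, ‖B f‖ ≤ c * ‖A f‖) ↔
      {k : K | adjoint B k ∈ Set.range ⇑(adjoint A)} = Set.univ) ∧
    ({k : K | adjoint B k ∈ Set.range ⇑(adjoint A)} = Set.univ ↔
      Set.range ⇑(adjoint B) ⊆ Set.range ⇑(adjoint A)) ∧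
    ((Set.range ⇑A = Set.univ ∧ ∃ c : ℝ, 0 ≤ c ∧ ∀ f : E, ‖B f‖ ≤ c * ‖A f‖) ↔
      Set.range ⇑(adjoint B) ⊆ Set.range ⇑(adjoint A) ∧ Set.range ⇑A = Set.univ) := by
  classical
  set D : Submodule ℂ K := Submodule.comap ((adjoint B : K →ₗ[ℂ] E))
      (LinearMap.range ((adjoint A : H →ₗ[ℂ] E))) with hD
  have hDset : {k : K | adjoint B k ∈ Set.range ⇑(adjoint A)} = (D : Set K) := by
    ext k
    simp [hD, LinearMap.mem_range]
  have HB : (∃ c : ℝ, 0 ≤ c ∧ ∀ f : E, ‖B f‖ ≤ c * ‖A f‖) ↔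
      {k : K | adjoint B k ∈ Set.range ⇑(adjoint A)} = Set.univ := by
    constructor
    · rintro ⟨c, -, hc⟩
      exact Set.eq_univ_iff_forall.mpr fun k => aux_mem_range_adjoint_of_bound A B hc k
    · intro hu
      exact aux_bound_of_range_incl A B fun k => Set.eq_univ_iff_forall.mp hu k
  have HB2 : {k : K | adjoint B k ∈ Set.range ⇑(adjoint A)} = Set.univ ↔
      Set.range ⇑(adjoint B) ⊆ Set.range ⇑(adjoint A) := by
    constructor
    · rintro hu x ⟨k, rfl⟩
      exact Set.eq_univ_iff_forall.mp hu k
    · intro hsub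
      exact Set.eq_univ_iff_forall.mpr fun k => hsub ⟨k, rfl⟩
  refine ⟨?_, HB, HB2, ?_⟩
  · rw [aux_mul_part_eq A B, hDset]
    have h1 : ((Dᗮ : Submodule ℂ K) : Set K) = ({0} : Set K) ↔ Dᗮ = ⊥ := by
      constructor
      · intro h
        exact SetLike.coe_injective (by rw [h, Submodule.bot_coe])
      · intro h
        rw [h, Submodule.bot_coe]
    rw [h1]
    rw [Submodule.dense_iff_topologicalClosure_eq_top, Submodule.topologicalClosure_eq_top_iff]
  · constructor
    · rintro ⟨h1, h2⟩
      exact ⟨HB2.mp (HB.mp h2), h1⟩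
    · rintro ⟨h1, h2⟩
      exact ⟨h2, HB.mpr (HB2.mpr h1)⟩
end

section
/- The following statements are equivalent: (i) the closure of L(A,B) in H × K equals closure(ran A) × closure(ran B) (i.e., L(A,B) is singular); (ii) D(A,B) ⊆ ker B*; (iii) R(A,B) := {h ∈ H : A* h ∈ ran B*} ⊆ ker A*; (iv) ran A* ∩ ran B* = {0}; (v) the adjoint relation {(k,h) ∈ K × H : B* k = A* h} equals ker B* × ker A*. -/
open ContinuousLinearMap

set_option maxHeartbeats 1000000 in
set_option synthInstance.maxHeartbeats 200000 in
/-- The following are equivalent: (i) the closure of `L(A,B)` equals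
`closure (ran A) × closure (ran B)` (`L(A,B)` is singular); (ii) `D(A,B) ⊆ ker B*`;
(iii) `R(A,B) = {h : A* h ∈ ran B*} ⊆ ker A*`; (iv) `ran A* ∩ ran B* = {0}`;
(v) the adjoint relation `{(k,h) : B* k = A* h}` equals `ker B* × ker A*`. -/
theorem singular_LAB_tfae
    {E H K : Type}
    [NormedAddCommGroup E] [InnerProductSpace ℂ E] [CompleteSpace E]
    [NormedAddCommGroup H] [InnerProductSpace ℂ H] [CompleteSpace H]
    [NormedAddCommGroup K] [InnerProductSpace ℂ K] [CompleteSpace K]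
    (A : E →L[ℂ] H) (B : E →L[ℂ] K) :
    List.TFAE
      [closure (Set.range fun f : E => ((A f, B f) : H × K)) =
        (closure (Set.range ⇑A)) ×ˢ (closure (Set.range ⇑B)),
      {k : K | adjoint B k ∈ Set.range ⇑(adjoint A)} ⊆
        (LinearMap.ker (↑(adjoint B) : K →ₗ[ℂ] E) : Set K),
      {h : H | adjoint A h ∈ Set.range ⇑(adjoint B)} ⊆
        (LinearMap.ker (↑(adjoint A) : H →ₗ[ℂ] E) : Set H),
      Set.range ⇑(adjoint A) ∩ Set.range ⇑(adjoint B) = {0},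
      {q : K × H | adjoint B q.1 = adjoint A q.2} =
        (LinearMap.ker (↑(adjoint B) : K →ₗ[ℂ] E) : Set K) ×ˢ (LinearMap.ker (↑(adjoint A) : H →ₗ[ℂ] E) : Set H)] := by
  set L : Set (H × K) := Set.range fun f : E => ((A f, B f) : H × K) with hLdef
  tfae_have 2 → 4 := by
    intro h2
    apply Set.eq_singleton_iff_unique_mem.mpr
    refine ⟨⟨⟨0, map_zero _⟩, ⟨0, map_zero _⟩⟩, ?_⟩
    rintro x ⟨⟨h, rfl⟩, ⟨k, hk⟩⟩
    have hk0 : adjoint B k = 0 := h2 ⟨h, hk.symm⟩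
    rw [← hk]; exact hk0
  tfae_have 4 → 2 := by
    intro h4 k hk
    have : adjoint B k ∈ Set.range ⇑(adjoint A) ∩ Set.range ⇑(adjoint B) := ⟨hk, ⟨k, rfl⟩⟩
    rw [h4] at this
    exact this
  tfae_have 3 → 4 := by
    intro h3
    apply Set.eq_singleton_iff_unique_mem.mpr
    refine ⟨⟨⟨0, map_zero _⟩, ⟨0, map_zero _⟩⟩, ?_⟩
    rintro x ⟨⟨h, rfl⟩, hk⟩
    exact h3 hk
  tfae_have 4 → 3 := by
    intro h4 h hh
    have : adjoint A h ∈ Set.range ⇑(adjoint A) ∩ Set.range ⇑(adjoint B) := ⟨⟨h, rfl⟩, hh⟩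
    rw [h4] at this
    exact this
  tfae_have 4 → 5 := by
    intro h4
    ext q
    constructor
    · intro hq
      have hq' : adjoint B q.1 = adjoint A q.2 := hq
      have : adjoint B q.1 ∈ Set.range ⇑(adjoint A) ∩ Set.range ⇑(adjoint B) :=
        ⟨⟨q.2, hq'.symm⟩, ⟨q.1, rfl⟩⟩
      rw [h4] at this
      have h1 : adjoint B q.1 = 0 := this
      exact ⟨h1, show adjoint A q.2 = 0 by rw [← hq']; exact h1⟩
    · rintro ⟨h1, h2⟩
      have h1' : adjoint B q.1 = 0 := h1
      have h2' : adjoint A q.2 = 0 := h2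
      simp only [Set.mem_setOf_eq, h1', h2']
  tfae_have 5 → 4 := by
    intro h5
    apply Set.eq_singleton_iff_unique_mem.mpr
    refine ⟨⟨⟨0, map_zero _⟩, ⟨0, map_zero _⟩⟩, ?_⟩
    rintro x ⟨⟨h, rfl⟩, ⟨k, hk⟩⟩
    have : ((k, h) : K × H) ∈ {q : K × H | adjoint B q.1 = adjoint A q.2} := hk
    rw [h5] at this
    have : adjoint B k = 0 := this.1
    rw [← hk]; exact this
  tfae_have 1 → 2 := by
    intro h1 k hk
    obtain ⟨h, hh⟩ := hk
    have key : ∀ f : E, inner (𝕜 := ℂ) (B f) k = 0 := by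
      intro f
      have hmem : ((0 : H), B f) ∈ closure L := by
        rw [h1]
        exact ⟨subset_closure ⟨0, map_zero A⟩, subset_closure ⟨f, rfl⟩⟩
      obtain ⟨u, hu, hconv⟩ := mem_closure_iff_seq_limit.mp hmem
      choose g hg using hu
      have t1 : Filter.Tendsto (fun n => inner (𝕜 := ℂ) ((u n).2) k) Filter.atTop
          (nhds (inner (𝕜 := ℂ) (B f) k)) := by
        have : Filter.Tendsto (fun n => (u n).2) Filter.atTop (nhds (B f)) :=
          (continuous_snd.tendsto _).comp hconv
        exact this.inner tendsto_const_nhds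
      have t2 : Filter.Tendsto (fun n => inner (𝕜 := ℂ) ((u n).2) k) Filter.atTop (nhds 0) := by
        have heq : (fun n => inner (𝕜 := ℂ) ((u n).2) k) =
            fun n => inner (𝕜 := ℂ) ((u n).1) h := by
          funext n
          rw [← hg n]
          simp only
          rw [← adjoint_inner_right B, ← hh, adjoint_inner_right A]
        rw [heq]
        have : Filter.Tendsto (fun n => (u n).1) Filter.atTop (nhds (0 : H)) :=
          (continuous_fst.tendsto _).comp hconv
        have h2 := Filter.Tendsto.inner (𝕜 := ℂ) this
          (tendsto_const_nhds (x := h) (f := Filter.atTop (α := ℕ)))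
        simpa using h2
      exact tendsto_nhds_unique t1 t2
    show adjoint B k = 0
    apply ext_inner_left ℂ
    intro f
    rw [adjoint_inner_right, inner_zero_right]
    exact key f
  tfae_have 4 → 1 := by
    intro h4
    set e : WithLp 2 (H × K) ≃L[ℂ] H × K := WithLp.prodContinuousLinearEquiv 2 ℂ H K with he
    set T : E →L[ℂ] WithLp 2 (H × K) :=
      (e.symm : (H × K) →L[ℂ] WithLp 2 (H × K)).comp (A.prod B) with hT
    have himg : ⇑e.symm '' L = Set.range ⇑T := by
      rw [hLdef, ← Set.range_comp]
      rfl
    have hsymm : (⇑e.symm) '' closure L = closure ((⇑e.symm) '' L) := by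
      exact e.symm.toHomeomorph.image_closure L
    have hclos : closure L = ⇑e '' closure (Set.range ⇑T) := by
      rw [← himg, ← hsymm]
      ext x
      simp [Set.image_image]
    have hset : closure (Set.range ⇑T) =
        ((LinearMap.range (T : E →ₗ[ℂ] WithLp 2 (H × K)))ᗮᗮ : Submodule ℂ (WithLp 2 (H × K))) := by
      rw [Submodule.orthogonal_orthogonal_eq_closure]
      rfl
    -- key membership lemma
    have mem_cl : ∀ p : H × K,
        (∀ q : WithLp 2 (H × K), adjoint A q.fst = 0 → adjoint B q.snd = 0 →
          inner (𝕜 := ℂ) q (e.symm p) = 0) → p ∈ closure L := by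
      intro p hp
      rw [hclos]
      refine ⟨e.symm p, ?_, by simp⟩
      rw [hset]
      intro q hq
      rw [Submodule.mem_orthogonal] at hq
      have h1 : ∀ g : E, inner (𝕜 := ℂ) (A g) q.fst + inner (𝕜 := ℂ) (B g) q.snd = 0 := by
        intro g
        have := hq (T g) (LinearMap.mem_range_self _ g)
        rw [WithLp.prod_inner_apply] at this
        exact this
      have hsum : adjoint A q.fst + adjoint B q.snd = 0 := by
        apply ext_inner_left ℂ
        intro v
        rw [inner_add_right, adjoint_inner_right, adjoint_inner_right, inner_zero_right]
        exact h1 v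
      have hA0 : adjoint A q.fst = 0 := by
        have hmem : adjoint A q.fst ∈ Set.range ⇑(adjoint A) ∩ Set.range ⇑(adjoint B) := by
          refine ⟨⟨q.fst, rfl⟩, ⟨-q.snd, ?_⟩⟩
          rw [map_neg]
          exact neg_eq_of_add_eq_zero_left hsum
        rw [h4] at hmem
        exact hmem
      have hB0 : adjoint B q.snd = 0 := by
        have := hsum
        rw [hA0, zero_add] at this
        exact this
      exact hp q hA0 hB0
    apply Set.Subset.antisymm
    · apply closure_minimal
      · rintro x ⟨f, rfl⟩
        exact ⟨subset_closure ⟨f, rfl⟩, subset_closure ⟨f, rfl⟩⟩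
      · exact isClosed_closure.prod isClosed_closure
    · rw [← closure_prod_eq]
      apply closure_minimal _ isClosed_closure
      rintro ⟨x, y⟩ ⟨⟨f, rfl⟩, ⟨g, rfl⟩⟩
      have hfst : ((A f, (0 : K)) : H × K) ∈ closure L := by
        apply mem_cl
        intro q hA0 _
        rw [WithLp.prod_inner_apply]
        have e1 : (e.symm (A f, (0 : K))).ofLp.1 = A f := rfl
        have e2 : (e.symm (A f, (0 : K))).ofLp.2 = (0 : K) := rfl
        rw [← WithLp.ofLp_fst] at hA0
        rw [e1, e2, inner_zero_right, add_zero, ← adjoint_inner_left, hA0, inner_zero_left]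
      have hsnd : (((0 : H), B g) : H × K) ∈ closure L := by
        apply mem_cl
        intro q _ hB0
        rw [WithLp.prod_inner_apply]
        have e1 : (e.symm ((0 : H), B g)).ofLp.1 = (0 : H) := rfl
        have e2 : (e.symm ((0 : H), B g)).ofLp.2 = B g := rfl
        rw [← WithLp.ofLp_snd] at hB0
        rw [e1, e2, inner_zero_right, zero_add, ← adjoint_inner_left, hB0, inner_zero_left]
      have hsub : ((LinearMap.range ((A.prod B : E →L[ℂ] H × K) : E →ₗ[ℂ] H × K)).topologicalClosure : Set (H × K)) =
          closure L := by
        rw [Submodule.topologicalClosure_coe]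
        congr 1
      rw [← hsub] at hfst hsnd ⊢
      have := Submodule.add_mem _ hfst hsnd
      have h' : (A f, B g) ∈ (LinearMap.range ((A.prod B : E →L[ℂ] H × K) : E →ₗ[ℂ] H × K)).topologicalClosure := by
        simpa using this
      exact h'
  tfae_finish
end

section
/- Let C_A and C_B be the operators associated with the pair (A,B). Then the following statements are equivalent: (i) the multivalued part of the closure of L(A,B) is trivial (i.e., L(A,B) is regular); (ii) the subspace {(C_A f, C_B f) : f ∈ E} is (the graph of) an operator; (iii) ker C_A ⊆ ker C_B. -/
open ContinuousLinearMap
open scoped InnerProductSpace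

set_option maxHeartbeats 1000000 in
/-- Let `S = (A*A + B*B)^{1/2}` be the positive square root and let `C_A`,
`C_B` be the unique contractions with `A = C_A ∘ S`, `B = C_B ∘ S` vanishing on
`ker A ∩ ker B`. The following are equivalent: (i) the multivalued part of the closure of
`L(A,B)` is trivial (`L(A,B)` is regular); (ii) `{(C_A f, C_B f) : f ∈ E}` is (the graph of)
an operator; (iii) `ker C_A ⊆ ker C_B`. -/
theorem regular_LAB_via_CACB_tfae
    {E H K : Type}
    [NormedAddCommGroup E] [InnerProductSpace ℂ E] [CompleteSpace E]
    [NormedAddCommGroup H] [InnerProductSpace ℂ H] [CompleteSpace H]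
    [NormedAddCommGroup K] [InnerProductSpace ℂ K] [CompleteSpace K]
    (A : E →L[ℂ] H) (B : E →L[ℂ] K)
    (S : E →L[ℂ] E) (hSpos : S.IsPositive)
    (hSsq : S ∘L S = adjoint A ∘L A + adjoint B ∘L B)
    (CA : E →L[ℂ] H) (CB : E →L[ℂ] K)
    (hCAnorm : ‖CA‖ ≤ 1) (hCBnorm : ‖CB‖ ≤ 1)
    (hA : A = CA ∘L S) (hB : B = CB ∘L S)
    (hker : ∀ f ∈ LinearMap.ker (A : E →ₗ[ℂ] H) ⊓ LinearMap.ker (B : E →ₗ[ℂ] K), CA f = 0 ∧ CB f = 0) :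
    List.TFAE
      [{k : K | ((0 : H), k) ∈
          closure (Set.range fun f : E => ((A f, B f) : H × K))} = {0},
      ∀ f g : E, CA f = CA g → CB f = CB g,
      LinearMap.ker (CA : E →ₗ[ℂ] H) ≤ LinearMap.ker (CB : E →ₗ[ℂ] K)] := by
  have hSym : (S : E →ₗ[ℂ] E).IsSymmetric := hSpos.isSelfAdjoint.isSymmetric
  have hSym' : ∀ x y : E, ⟪S x, y⟫_ℂ = ⟪x, S y⟫_ℂ := by
    intro x y
    have h := hSym x y
    simpa using h
  have hinner : ∀ f : E, ⟪S f, S f⟫_ℂ = ⟪A f, A f⟫_ℂ + ⟪B f, B f⟫_ℂ := by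
    intro f
    have h1 : ⟪S f, S f⟫_ℂ = ⟪f, S (S f)⟫_ℂ := hSym' f (S f)
    have h2 : S (S f) = adjoint A (A f) + adjoint B (B f) := by
      have := congrFun (congrArg (fun (T : E →L[ℂ] E) => (T : E → E)) hSsq) f
      simpa using this
    rw [h1, h2, inner_add_right, adjoint_inner_right, adjoint_inner_right]
  have hnormsq : ∀ f : E, ‖S f‖ ^ 2 = ‖A f‖ ^ 2 + ‖B f‖ ^ 2 := by
    intro f
    have h := congrArg (fun z : ℂ => RCLike.re z) (hinner f)
    simpa only [map_add, inner_self_eq_norm_sq] using h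
  -- closed subspace M = closure (range S)
  set R : Submodule ℂ E := LinearMap.range (S : E →ₗ[ℂ] E) with hR
  set M : Submodule ℂ E := R.topologicalClosure with hM
  have hMclosure : (M : Set E) = closure (Set.range fun f : E => S f) := by
    simp [hM, hR, Submodule.topologicalClosure_coe, LinearMap.coe_range]
  tfae_have 2 → 3 := by
    intro h2 f hf
    have hf0 : CA f = 0 := hf
    have := h2 f 0 (by simpa using hf0)
    simpa using this
  tfae_have 3 → 2 := by
    intro h3 f g hfg
    have : CA (f - g) = 0 := by rw [map_sub, hfg, sub_self]
    have hsub : CB (f - g) = 0 := h3 this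
    rw [map_sub, sub_eq_zero] at hsub
    exact hsub
  tfae_have 3 → 1 := by
    intro h3
    ext k
    simp only [Set.mem_setOf_eq, Set.mem_singleton_iff]
    constructor
    · intro hk
      obtain ⟨x, hxmem, hxlim⟩ := mem_closure_iff_seq_limit.1 hk
      choose f hf using hxmem
      have hf' : ∀ n, ((A (f n), B (f n)) : H × K) = x n := hf
      have hAlim : Filter.Tendsto (fun n => A (f n)) Filter.atTop (nhds 0) :=
        ((continuous_fst.tendsto ((0 : H), k)).comp hxlim).congr
          (fun n => by show (x n).1 = A (f n); rw [← hf' n])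
      have hBlim : Filter.Tendsto (fun n => B (f n)) Filter.atTop (nhds k) :=
        ((continuous_snd.tendsto ((0 : H), k)).comp hxlim).congr
          (fun n => by show (x n).2 = B (f n); rw [← hf' n])
      have hnle : ∀ g : E, ‖S g‖ ≤ ‖A g‖ + ‖B g‖ := by
        intro g
        nlinarith [hnormsq g, norm_nonneg (S g), norm_nonneg (A g), norm_nonneg (B g),
          sq_nonneg (‖A g‖ - ‖B g‖)]
      have hcx : CauchySeq x := hxlim.cauchySeq
      have hcS : CauchySeq (fun n => S (f n)) := by
        rw [Metric.cauchySeq_iff] at hcx ⊢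
        intro ε hε
        obtain ⟨N, hN⟩ := hcx (ε / 2) (by linarith)
        refine ⟨N, fun m hm n hn => ?_⟩
        have hd := hN m hm n hn
        have h1 : dist (A (f m)) (A (f n)) < ε / 2 := by
          calc dist (A (f m)) (A (f n)) = dist (x m).1 (x n).1 := by rw [← hf' m, ← hf' n]
            _ ≤ dist (x m) (x n) := by rw [Prod.dist_eq]; exact le_max_left _ _
            _ < ε / 2 := hd
        have h2 : dist (B (f m)) (B (f n)) < ε / 2 := by
          calc dist (B (f m)) (B (f n)) = dist (x m).2 (x n).2 := by rw [← hf' m, ← hf' n]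
            _ ≤ dist (x m) (x n) := by rw [Prod.dist_eq]; exact le_max_right _ _
            _ < ε / 2 := hd
        rw [dist_eq_norm] at h1 h2 ⊢
        have hle := hnle (f m - f n)
        simp only [map_sub] at hle
        linarith
      obtain ⟨h, hh⟩ := cauchySeq_tendsto_of_complete hcS
      have hAh : Filter.Tendsto (fun n => A (f n)) Filter.atTop (nhds (CA h)) :=
        ((CA.continuous.tendsto h).comp hh).congr (fun n => by rw [hA]; rfl)
      have hBh : Filter.Tendsto (fun n => B (f n)) Filter.atTop (nhds (CB h)) :=
        ((CB.continuous.tendsto h).comp hh).congr (fun n => by rw [hB]; rfl)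
      have hCAh0 : CA h = 0 := tendsto_nhds_unique hAh hAlim
      have hCBh0 : CB h = 0 := h3 hCAh0
      have hk' : CB h = k := tendsto_nhds_unique hBh hBlim
      rw [← hk', hCBh0]
    · rintro rfl
      exact subset_closure ⟨0, by simp⟩
  tfae_have 1 → 3 := by
    intro h1 f hf
    have hf0 : CA f = 0 := hf
    obtain ⟨m, hm, n, hn, hfmn⟩ := M.exists_add_mem_mem_orthogonal f
    -- S n = 0
    have hSSn : S (S n) ∈ M := R.le_topologicalClosure ⟨S n, rfl⟩
    have horth : ⟪S (S n), n⟫_ℂ = 0 := (Submodule.mem_orthogonal M n).1 hn _ hSSn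
    have hSn : S n = 0 := by
      have h0 : ⟪S n, S n⟫_ℂ = 0 := by rw [← hSym' (S n) n]; exact horth
      exact inner_self_eq_zero.1 h0
    have hABn : A n = 0 ∧ B n = 0 := by
      have hq := hnormsq n
      rw [hSn] at hq
      simp only [norm_zero] at hq
      constructor
      · have : ‖A n‖ = 0 := by nlinarith [norm_nonneg (A n), norm_nonneg (B n)]
        exact norm_eq_zero.1 this
      · have : ‖B n‖ = 0 := by nlinarith [norm_nonneg (A n), norm_nonneg (B n)]
        exact norm_eq_zero.1 this
    have hCn := hker n (by
      simp only [Submodule.mem_inf, LinearMap.mem_ker]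
      exact hABn)
    have hCAm : CA m = 0 := by
      have hm0 : CA (m + n) = 0 := by rw [← hfmn]; exact hf0
      rwa [map_add, hCn.1, add_zero] at hm0
    have hmcl : m ∈ closure (Set.range fun f : E => S f) := by
      rw [← hMclosure]; exact hm
    have hmap : ((CA m, CB m) : H × K) ∈
        closure (Set.range fun f : E => ((A f, B f) : H × K)) := by
      refine map_mem_closure (f := fun x : E => ((CA x, CB x) : H × K))
        (CA.continuous.prodMk CB.continuous) hmcl ?_
      rintro y ⟨g, rfl⟩
      exact ⟨g, by rw [hA, hB]; rfl⟩
    have hCBm : CB m = 0 := by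
      have hmem : CB m ∈ {k : K | ((0 : H), k) ∈
          closure (Set.range fun f : E => ((A f, B f) : H × K))} := by
        simpa [hCAm] using hmap
      rw [h1] at hmem
      exact hmem
    show CB f = 0
    rw [hfmn, map_add, hCBm, hCn.2, add_zero]
  tfae_finish
end

section
/- Let C_A and C_B be the operators associated with the pair (A,B). Then the closure of L(A,B) in H × K equals closure(ran A) × closure(ran B) (i.e., L(A,B) is singular) if and only if ker C_A + ker C_B = E. -/
open ContinuousLinearMap

set_option maxHeartbeats 1600000 in
/-- Let `S = (A*A + B*B)^{1/2}` be the positive square root and let `C_A`,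
`C_B` be the unique contractions with `A = C_A ∘ S`, `B = C_B ∘ S` vanishing on
`ker A ∩ ker B`. Then the closure of `L(A,B)` equals `closure (ran A) × closure (ran B)`
(`L(A,B)` is singular) if and only if `ker C_A + ker C_B = E`. -/
theorem singular_LAB_iff_ker_sum
    {E H K : Type}
    [NormedAddCommGroup E] [InnerProductSpace ℂ E] [CompleteSpace E]
    [NormedAddCommGroup H] [InnerProductSpace ℂ H] [CompleteSpace H]
    [NormedAddCommGroup K] [InnerProductSpace ℂ K] [CompleteSpace K]
    (A : E →L[ℂ] H) (B : E →L[ℂ] K)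
    (S : E →L[ℂ] E) (hSpos : S.IsPositive)
    (hSsq : S ∘L S = adjoint A ∘L A + adjoint B ∘L B)
    (CA : E →L[ℂ] H) (CB : E →L[ℂ] K)
    (hCAnorm : ‖CA‖ ≤ 1) (hCBnorm : ‖CB‖ ≤ 1)
    (hA : A = CA ∘L S) (hB : B = CB ∘L S)
    (hker : ∀ f ∈ LinearMap.ker (A : E →ₗ[ℂ] H) ⊓ LinearMap.ker (B : E →ₗ[ℂ] K), CA f = 0 ∧ CB f = 0) :
    closure (Set.range fun f : E => ((A f, B f) : H × K)) =
        (closure (Set.range ⇑A)) ×ˢ (closure (Set.range ⇑B)) ↔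
      LinearMap.ker (CA : E →ₗ[ℂ] H) ⊔ LinearMap.ker (CB : E →ₗ[ℂ] K) = ⊤ := by
  classical
  have hadj : adjoint S = S := ContinuousLinearMap.isSelfAdjoint_iff'.mp hSpos.isSelfAdjoint
  -- the fundamental norm identity
  have hnorm : ∀ f : E, ‖S f‖ ^ 2 = ‖A f‖ ^ 2 + ‖B f‖ ^ 2 := by
    intro f
    have h1 : (inner ℂ ((S ∘L S) f) f : ℂ) = inner ℂ ((adjoint A ∘L A + adjoint B ∘L B) f) f := by
      rw [hSsq]
    have h2 : (inner ℂ ((S ∘L S) f) f : ℂ) = (‖S f‖ : ℂ) ^ 2 := by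
      have hc : (S ∘L S) f = S (S f) := rfl
      rw [hc]
      calc (inner ℂ (S (S f)) f : ℂ) = inner ℂ ((adjoint S) (S f)) f := by rw [hadj]
        _ = inner ℂ (S f) (S f) := ContinuousLinearMap.adjoint_inner_left _ _ _
        _ = (‖S f‖ : ℂ) ^ 2 := inner_self_eq_norm_sq_to_K _
    have h3 : (inner ℂ ((adjoint A ∘L A + adjoint B ∘L B) f) f : ℂ)
        = (‖A f‖ : ℂ) ^ 2 + (‖B f‖ : ℂ) ^ 2 := by
      have hc : ((adjoint A ∘L A + adjoint B ∘L B) f) = adjoint A (A f) + adjoint B (B f) := rfl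
      rw [hc, inner_add_left, ContinuousLinearMap.adjoint_inner_left,
        ContinuousLinearMap.adjoint_inner_left, inner_self_eq_norm_sq_to_K,
        inner_self_eq_norm_sq_to_K]
      norm_cast
    have h4 := h2.symm.trans (h1.trans h3)
    exact_mod_cast h4
  -- kernel of S
  have hkerS : ∀ f : E, S f = 0 → A f = 0 ∧ B f = 0 := by
    intro f hf
    have h0 : ‖A f‖ ^ 2 + ‖B f‖ ^ 2 = 0 := by
      rw [← hnorm, hf, norm_zero]; ring
    have hA2 : ‖A f‖ ^ 2 = 0 := by
      have := sq_nonneg ‖A f‖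
      have := sq_nonneg ‖B f‖
      linarith
    have hB2 : ‖B f‖ ^ 2 = 0 := by
      have := sq_nonneg ‖A f‖
      have := sq_nonneg ‖B f‖
      linarith
    exact ⟨norm_eq_zero.mp (sq_eq_zero_iff.mp hA2), norm_eq_zero.mp (sq_eq_zero_iff.mp hB2)⟩
  -- CA, CB vanish on ker S
  have hCker : ∀ f : E, S f = 0 → CA f = 0 ∧ CB f = 0 := by
    intro f hf
    obtain ⟨hA0, hB0⟩ := hkerS f hf
    exact hker f (Submodule.mem_inf.mpr ⟨hA0, hB0⟩)
  -- the closed subspace M = closure of range S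
  set M : Submodule ℂ E := (LinearMap.range (S : E →ₗ[ℂ] E)).topologicalClosure with hMdef
  have hMclosed : IsClosed (M : Set E) := Submodule.isClosed_topologicalClosure _
  haveI : CompleteSpace M := hMclosed.completeSpace_coe
  have hMcoe : (M : Set E) = closure (Set.range ⇑S) := by
    rw [hMdef]
    rfl
  have hSmemM : ∀ f : E, S f ∈ M :=
    fun f => (LinearMap.range (S : E →ₗ[ℂ] E)).le_topologicalClosure (LinearMap.mem_range_self (S : E →ₗ[ℂ] E) f)
  -- elements of Mᗮ are killed by S, hence by CA and CB
  have horth : ∀ b : E, b ∈ Mᗮ → S b = 0 ∧ CA b = 0 ∧ CB b = 0 := by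
    intro b hb
    have hSb : S b = 0 := by
      have h1 : ∀ f : E, (inner ℂ (S f) b : ℂ) = 0 := fun f => hb (S f) (hSmemM f)
      have h2 : (inner ℂ (S b) (S b) : ℂ) = 0 := by
        have := h1 (S b)
        calc (inner ℂ (S b) (S b) : ℂ) = inner ℂ (S b) ((adjoint S) b) := by rw [hadj]
          _ = inner ℂ (S (S b)) b := ContinuousLinearMap.adjoint_inner_right _ _ _
          _ = 0 := h1 (S b)
      exact inner_self_eq_zero.mp h2
    exact ⟨hSb, hCker b hSb⟩
  -- the norm identity on M
  have hMnorm : ∀ g ∈ (M : Set E), ‖g‖ ^ 2 = ‖CA g‖ ^ 2 + ‖CB g‖ ^ 2 := by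
    have hcl : IsClosed {g : E | ‖g‖ ^ 2 = ‖CA g‖ ^ 2 + ‖CB g‖ ^ 2} := by
      apply isClosed_eq
      · exact (continuous_norm).pow 2
      · exact ((CA.continuous.norm.pow 2).add (CB.continuous.norm.pow 2))
    have hsub : Set.range ⇑S ⊆ {g : E | ‖g‖ ^ 2 = ‖CA g‖ ^ 2 + ‖CB g‖ ^ 2} := by
      rintro _ ⟨f, rfl⟩
      have h1 : CA (S f) = A f := by rw [hA]; rfl
      have h2 : CB (S f) = B f := by rw [hB]; rfl
      simp only [Set.mem_setOf_eq, h1, h2]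
      exact hnorm f
    intro g hg
    rw [hMcoe] at hg
    exact hcl.closure_subset_iff.mpr hsub hg
  -- the map T = (CA, CB)
  set T : E →L[ℂ] H × K := CA.prod CB with hTdef
  have hTapp : ∀ g : E, T g = (CA g, CB g) := fun g => rfl
  -- T restricted to M has closed image
  have hclosedT : IsClosed (T '' (M : Set E)) := by
    set T₀ : M →L[ℂ] H × K := T.comp M.subtypeL with hT0def
    have hbound : ∀ g : M, ‖g‖ ≤ 2 * ‖T₀ g‖ := by
      intro g
      have hg2 : ‖(g : E)‖ ^ 2 = ‖CA (g : E)‖ ^ 2 + ‖CB (g : E)‖ ^ 2 := hMnorm _ g.2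
      have hTapp' : T₀ g = (CA (g : E), CB (g : E)) := rfl
      have hTn : ‖T₀ g‖ = max ‖CA (g : E)‖ ‖CB (g : E)‖ := by
        rw [hTapp', Prod.norm_def]
      have h1 : ‖CA (g : E)‖ ≤ ‖T₀ g‖ := by rw [hTn]; exact le_max_left _ _
      have h2 : ‖CB (g : E)‖ ≤ ‖T₀ g‖ := by rw [hTn]; exact le_max_right _ _
      have h3 : ‖(g : E)‖ ^ 2 ≤ (2 * ‖T₀ g‖) ^ 2 := by
        have ha := pow_le_pow_left₀ (norm_nonneg (CA (g : E))) h1 2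
        have hb := pow_le_pow_left₀ (norm_nonneg (CB (g : E))) h2 2
        have hm := sq_nonneg ‖T₀ g‖
        rw [hg2]
        nlinarith [ha, hb, hm]
      have h4 : (0:ℝ) ≤ 2 * ‖T₀ g‖ := by positivity
      calc ‖g‖ = Real.sqrt (‖(g : E)‖ ^ 2) := by
              rw [Real.sqrt_sq (norm_nonneg _)]; rfl
        _ ≤ Real.sqrt ((2 * ‖T₀ g‖) ^ 2) := Real.sqrt_le_sqrt h3
        _ = 2 * ‖T₀ g‖ := Real.sqrt_sq h4
    have hanti : AntilipschitzWith 2 ⇑T₀ :=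
      AddMonoidHomClass.antilipschitz_of_bound T₀ (by exact_mod_cast hbound)
    have hrange : Set.range ⇑T₀ = T '' (M : Set E) := by
      have : ⇑T₀ = ⇑T ∘ ((↑) : M → E) := rfl
      rw [this, Set.range_comp, Subtype.range_coe]
    rw [← hrange]
    exact hanti.isClosed_range T₀.uniformContinuous
  -- closure of L(A,B) = T '' M
  have hLT : (fun f : E => ((A f, B f) : H × K)) = fun f => T (S f) := by
    funext f
    rw [hTapp, hA, hB]
    rfl
  have hkey : closure (Set.range fun f : E => ((A f, B f) : H × K)) = T '' (M : Set E) := by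
    apply Set.Subset.antisymm
    · apply closure_minimal _ hclosedT
      rw [hLT]
      rintro _ ⟨f, rfl⟩
      exact ⟨S f, hSmemM f, rfl⟩
    · have h1 : T '' (M : Set E) ⊆ closure (T '' Set.range ⇑S) := by
        rw [hMcoe]
        exact image_closure_subset_closure_image T.continuous
      have h2 : T '' Set.range ⇑S = Set.range fun f : E => ((A f, B f) : H × K) := by
        rw [hLT, ← Set.range_comp]
        rfl
      rw [h2] at h1
      exact h1
  -- ranges
  have hranA : Set.range ⇑A = ⇑CA '' Set.range ⇑S := by
    rw [hA, ← Set.range_comp]; rfl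
  have hranB : Set.range ⇑B = ⇑CB '' Set.range ⇑S := by
    rw [hB, ← Set.range_comp]; rfl
  constructor
  · -- singular → ker sum = ⊤
    intro hsing
    rw [eq_top_iff]
    intro x _
    obtain ⟨y, hy, b, hb, hxyb⟩ := M.exists_add_mem_mem_orthogonal x
    obtain ⟨-, hCAb, hCBb⟩ := horth b hb
    -- (CA y, 0) lies in the product of closures
    have hCAy : CA y ∈ closure (Set.range ⇑A) := by
      rw [hranA]
      have hy' : y ∈ closure (Set.range ⇑S) := by rw [← hMcoe]; exact hy
      exact (image_closure_subset_closure_image CA.continuous) ⟨y, hy', rfl⟩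
    have h0B : (0 : K) ∈ closure (Set.range ⇑B) := subset_closure ⟨0, by simp⟩
    have hmem : ((CA y, (0 : K)) : H × K) ∈ T '' (M : Set E) := by
      rw [← hkey, hsing]
      exact Set.mem_prod.mpr ⟨hCAy, h0B⟩
    obtain ⟨z, hz, hTz⟩ := hmem
    rw [hTapp] at hTz
    have hz1 : CA z = CA y := congrArg Prod.fst hTz
    have hz2 : CB z = 0 := congrArg Prod.snd hTz
    have hu : y - z ∈ LinearMap.ker (CA : E →ₗ[ℂ] H) := by
      simp [LinearMap.mem_ker, map_sub, hz1]
    have hv : z + b ∈ LinearMap.ker (CB : E →ₗ[ℂ] K) := by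
      simp [LinearMap.mem_ker, map_add, hz2, hCBb]
    have : x = (y - z) + (z + b) := by rw [hxyb]; abel
    rw [this]
    exact Submodule.add_mem_sup hu hv
  · -- ker sum = ⊤ → singular
    intro hsum
    apply Set.Subset.antisymm
    · have h1 : (Set.range fun f : E => ((A f, B f) : H × K))
          ⊆ Set.range ⇑A ×ˢ Set.range ⇑B := by
        rintro _ ⟨f, rfl⟩
        exact ⟨⟨f, rfl⟩, ⟨f, rfl⟩⟩
      calc closure (Set.range fun f : E => ((A f, B f) : H × K))
          ⊆ closure (Set.range ⇑A ×ˢ Set.range ⇑B) := closure_mono h1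
        _ = closure (Set.range ⇑A) ×ˢ closure (Set.range ⇑B) := closure_prod_eq
    · rw [← closure_prod_eq]
      apply closure_minimal _ isClosed_closure
      rintro ⟨-, -⟩ ⟨⟨f, rfl⟩, ⟨g, rfl⟩⟩
      -- find y ∈ M with CA y = A f, CB y = B g
      have hmem : S f - S g ∈ LinearMap.ker (CA : E →ₗ[ℂ] H) ⊔ LinearMap.ker (CB : E →ₗ[ℂ] K) := by
        rw [hsum]; trivial
      obtain ⟨u, hu, v, hv, huv⟩ := Submodule.mem_sup.mp hmem
      obtain ⟨y, hy, b, hb, htyb⟩ := M.exists_add_mem_mem_orthogonal (S f - u)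
      obtain ⟨-, hCAb, hCBb⟩ := horth b hb
      have hCASf : CA (S f) = A f := by rw [hA]; rfl
      have hCBSg : CB (S g) = B g := by rw [hB]; rfl
      have hCAy : CA y = A f := by
        have : CA (S f - u) = CA y := by rw [htyb, map_add, hCAb, add_zero]
        rw [← this, map_sub, hCASf, (show CA u = 0 from hu), sub_zero]
      have hCBy : CB y = B g := by
        have heq : S f - u = S g + v := by
          have h' : u + v + S g = S f := by rw [huv]; abel
          rw [← h']; abel
        have h1 : CB (S f - u) = CB y := by rw [htyb, map_add, hCBb, add_zero]
        rw [← h1, heq, map_add, hCBSg, (show CB v = 0 from hv), add_zero]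
      rw [hkey]
      exact ⟨y, hy, by rw [hTapp, hCAy, hCBy]⟩
end

section
/- The following statements are equivalent: (i) B is singular with respect to A; (ii) ran A* ∩ ran B* = {0}; (iii) the closure of L(A,B) in H × K equals closure(ran A) × closure(ran B) (i.e., L(A,B) is singular). -/
open ContinuousLinearMap

/-- `B` is singular with respect to `A`: every bounded operator `D : E → E` that is dominated
both by `A` and by `B` (i.e. `‖D f‖ ≤ c ‖A f‖` and `‖D f‖ ≤ c' ‖B f‖` for some `c, c' > 0`)
is zero. -/
def SingularWith
    {E H K : Type}
    [NormedAddCommGroup E] [InnerProductSpace ℂ E] [CompleteSpace E]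
    [NormedAddCommGroup H] [InnerProductSpace ℂ H] [CompleteSpace H]
    [NormedAddCommGroup K] [InnerProductSpace ℂ K] [CompleteSpace K]
    (A : E →L[ℂ] H) (B : E →L[ℂ] K) : Prop :=
  ∀ D : E →L[ℂ] E,
    (∃ c : ℝ, 0 < c ∧ ∀ f : E, ‖D f‖ ≤ c * ‖A f‖) →
    (∃ c : ℝ, 0 < c ∧ ∀ f : E, ‖D f‖ ≤ c * ‖B f‖) → D = 0

section Aux

variable {E H K : Type}
    [NormedAddCommGroup E] [InnerProductSpace ℂ E] [CompleteSpace E]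
    [NormedAddCommGroup H] [InnerProductSpace ℂ H] [CompleteSpace H]
    [NormedAddCommGroup K] [InnerProductSpace ℂ K] [CompleteSpace K]

local notation "⟪" x ", " y "⟫" => @inner ℂ _ _ x y

/-- The norm bound for the rank-one operator `f ↦ ⟪w, f⟫ • w` built from `w = T† z`. -/
theorem singular_rankone_bound (T : E →L[ℂ] H) (z : H) (w : E)
    (hz : w = adjoint T z) (f : E) :
    ‖(⟪w, f⟫ : ℂ) • w‖ ≤ (‖z‖ * ‖w‖ + 1) * ‖T f‖ := by
  have h1 : ‖(⟪w, f⟫ : ℂ) • w‖ = ‖(⟪w, f⟫ : ℂ)‖ * ‖w‖ := norm_smul _ _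
  have h2 : (⟪w, f⟫ : ℂ) = ⟪z, T f⟫ := by rw [hz, adjoint_inner_left]
  have h3 : ‖(⟪z, T f⟫ : ℂ)‖ ≤ ‖z‖ * ‖T f‖ := norm_inner_le_norm z (T f)
  have h4 : (0:ℝ) ≤ ‖T f‖ := norm_nonneg _
  have h5 : (0:ℝ) ≤ ‖w‖ := norm_nonneg _
  rw [h1, h2]
  nlinarith [mul_le_mul_of_nonneg_right h3 h5]

/-- (i) → (ii) -/
theorem singular_aux12 (A : E →L[ℂ] H) (B : E →L[ℂ] K) (h : SingularWith A B) :
    Set.range ⇑(adjoint A) ∩ Set.range ⇑(adjoint B) = {0} := by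
  apply Set.eq_singleton_iff_unique_mem.mpr
  refine ⟨⟨⟨0, map_zero _⟩, ⟨0, map_zero _⟩⟩, ?_⟩
  rintro w ⟨⟨u, hu⟩, ⟨v, hv⟩⟩
  -- rank one operator `f ↦ ⟪w, f⟫ • w`
  set D : E →L[ℂ] E := (innerSL ℂ w).smulRight w with hD
  have hDapp : ∀ f, D f = (⟪w, f⟫ : ℂ) • w := fun f => rfl
  have hA : ∃ c : ℝ, 0 < c ∧ ∀ f : E, ‖D f‖ ≤ c * ‖A f‖ := by
    refine ⟨‖u‖ * ‖w‖ + 1, by positivity, fun f => ?_⟩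
    rw [hDapp]
    exact singular_rankone_bound A u w hu.symm f
  have hB : ∃ c : ℝ, 0 < c ∧ ∀ f : E, ‖D f‖ ≤ c * ‖B f‖ := by
    refine ⟨‖v‖ * ‖w‖ + 1, by positivity, fun f => ?_⟩
    rw [hDapp]
    exact singular_rankone_bound B v w hv.symm f
  have hD0 : D = 0 := h D hA hB
  have : (⟪w, w⟫ : ℂ) • w = 0 := by
    rw [← hDapp w, hD0]; rfl
  rcases smul_eq_zero.mp this with h0 | h0
  · exact inner_self_eq_zero.mp h0
  · exact h0

/-- (iii) → (i) -/
theorem singular_aux31 (A : E →L[ℂ] H) (B : E →L[ℂ] K)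
    (h : closure (Set.range fun f : E => ((A f, B f) : H × K)) =
        (closure (Set.range ⇑A)) ×ˢ (closure (Set.range ⇑B))) :
    SingularWith A B := by
  rintro D ⟨c, hc, hcA⟩ ⟨c', hc', hcB⟩
  ext f
  rw [ContinuousLinearMap.zero_apply, ← norm_le_zero_iff]
  refine le_of_forall_pos_le_add (fun ε hε => ?_)
  rw [zero_add]
  -- `(A f, 0)` belongs to the closure of the range of the pairing
  have hmem : ((A f, 0) : H × K) ∈
      closure (Set.range fun f : E => ((A f, B f) : H × K)) := by
    rw [h]
    exact ⟨subset_closure (Set.mem_range_self f),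
      subset_closure ⟨0, map_zero B⟩⟩
  set δ : ℝ := ε / (c + c') with hδ
  have hδpos : 0 < δ := div_pos hε (by linarith)
  rcases Metric.mem_closure_iff.mp hmem δ hδpos with ⟨p, hp, hdist⟩
  rcases hp with ⟨g, rfl⟩
  rw [Prod.dist_eq, max_lt_iff] at hdist
  obtain ⟨h1, h2⟩ := hdist
  rw [dist_eq_norm] at h1 h2
  have hAg : ‖A f - A g‖ < δ := h1
  have hBg : ‖B g‖ < δ := by simpa [norm_sub_rev] using h2
  have step1 : ‖D f‖ ≤ ‖D (f - g)‖ + ‖D g‖ := by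
    calc ‖D f‖ = ‖D (f - g) + D g‖ := by
          congr 1
          rw [← map_add]
          congr 1
          abel
    _ ≤ ‖D (f - g)‖ + ‖D g‖ := norm_add_le _ _
  have step2 : ‖D (f - g)‖ ≤ c * ‖A f - A g‖ := by
    simpa [map_sub] using hcA (f - g)
  have step3 : ‖D g‖ ≤ c' * ‖B g‖ := hcB g
  have hcc : c + c' ≠ 0 := by positivity
  have : ‖D f‖ ≤ c * δ + c' * δ := by
    have := mul_le_mul_of_nonneg_left hAg.le hc.le
    have := mul_le_mul_of_nonneg_left hBg.le hc'.le
    linarith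
  calc ‖D f‖ ≤ c * δ + c' * δ := this
  _ = (c + c') * (ε / (c + c')) := by rw [hδ]; ring
  _ = ε := by field_simp

/-- (ii) → (iii) -/
theorem singular_aux23 (A : E →L[ℂ] H) (B : E →L[ℂ] K)
    (h : Set.range ⇑(adjoint A) ∩ Set.range ⇑(adjoint B) = {0}) :
    closure (Set.range fun f : E => ((A f, B f) : H × K)) =
        (closure (Set.range ⇑A)) ×ˢ (closure (Set.range ⇑B)) := by
  classical
  -- work in the Hilbert space `WithLp 2 (H × K)`
  set e : WithLp 2 (H × K) ≃L[ℂ] H × K := WithLp.prodContinuousLinearEquiv 2 ℂ H K with he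
  set T : E →L[ℂ] WithLp 2 (H × K) :=
    (e.symm : (H × K) →L[ℂ] WithLp 2 (H × K)).comp (A.prod B) with hT
  have hTapp : ∀ f, e (T f) = (A f, B f) := fun f => e.apply_symm_apply _
  set L : Submodule ℂ (WithLp 2 (H × K)) := LinearMap.range (T : E →ₗ[ℂ] WithLp 2 (H × K))
    with hL
  set M : Submodule ℂ (WithLp 2 (H × K)) :=
    Submodule.comap (e : WithLp 2 (H × K) →ₗ[ℂ] H × K)
      ((LinearMap.range (A : E →ₗ[ℂ] H)).prod (LinearMap.range (B : E →ₗ[ℂ] K))) with hM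
  -- key step : the orthogonal complements agree
  have horth : Lᗮ = Mᗮ := by
    ext x
    have hfst : ∀ y : WithLp 2 (H × K), (e y).1 = y.ofLp.1 := fun _ => rfl
    have hsnd : ∀ y : WithLp 2 (H × K), (e y).2 = y.ofLp.2 := fun _ => rfl
    rw [Submodule.mem_orthogonal, Submodule.mem_orthogonal]
    constructor
    · intro hx y hy
      rcases Submodule.mem_comap.mp hy with ⟨⟨f, hf⟩, ⟨g, hg⟩⟩
      have hf' : A f = y.ofLp.1 := hf
      have hg' : B g = y.ofLp.2 := hg
      -- from `hx`: `adjoint A x.ofLp.1 + adjoint B x.ofLp.2 = 0`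
      have key : ∀ f : E, ⟪A f, x.ofLp.1⟫ + ⟪B f, x.ofLp.2⟫ = 0 := by
        intro f
        have := hx (T f) (LinearMap.mem_range_self _ f)
        rwa [WithLp.prod_inner_apply, ← hfst (T f), ← hsnd (T f), hTapp f] at this
      have key2 : adjoint A x.ofLp.1 + adjoint B x.ofLp.2 = 0 := by
        have h0 : ∀ f : E, ⟪f, adjoint A x.ofLp.1 + adjoint B x.ofLp.2⟫ = 0 := by
          intro f
          rw [inner_add_right, adjoint_inner_right, adjoint_inner_right]
          exact key f
        have := h0 (adjoint A x.ofLp.1 + adjoint B x.ofLp.2)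
        rwa [inner_self_eq_zero] at this
      -- hence `adjoint A x.ofLp.1 ∈ ran A* ∩ ran B* = {0}`, so both adjoints vanish at `x`
      have hz : adjoint A x.ofLp.1 = 0 := by
        have hmem : adjoint A x.ofLp.1 ∈ Set.range ⇑(adjoint A) ∩ Set.range ⇑(adjoint B) :=
          ⟨Set.mem_range_self _, ⟨-x.ofLp.2, by
            rw [map_neg]
            exact (eq_neg_of_add_eq_zero_left key2).symm⟩⟩
        rw [h] at hmem; exact hmem
      have hz' : adjoint B x.ofLp.2 = 0 := by
        rw [hz, zero_add] at key2; exact key2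
      -- now `⟪y, x⟫ = ⟪y.ofLp.1, x.ofLp.1⟫ + ⟪y.ofLp.2, x.ofLp.2⟫ = 0`
      rw [WithLp.prod_inner_apply]
      have e1 : ⟪y.ofLp.1, x.ofLp.1⟫ = 0 := by
        rw [← hf', ← adjoint_inner_right, hz, inner_zero_right]
      have e2 : ⟪y.ofLp.2, x.ofLp.2⟫ = 0 := by
        rw [← hg', ← adjoint_inner_right, hz', inner_zero_right]
      rw [e1, e2, add_zero]
    · intro hx y hy
      rcases hy with ⟨f, rfl⟩
      apply hx
      refine Submodule.mem_comap.mpr ?_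
      have h' : ((e : WithLp 2 (H × K) →ₗ[ℂ] H × K) (T f)) = (A f, B f) := hTapp f
      refine Submodule.mem_prod.mpr ⟨LinearMap.mem_range.mpr ⟨f, ?_⟩,
        LinearMap.mem_range.mpr ⟨f, ?_⟩⟩
      · exact congrArg Prod.fst h'.symm
      · exact congrArg Prod.snd h'.symm
  -- take orthogonal complements again
  have hcl : L.topologicalClosure = M.topologicalClosure := by
    rw [← Submodule.orthogonal_orthogonal_eq_closure, ← Submodule.orthogonal_orthogonal_eq_closure,
      horth]
  -- translate back to `H × K`
  have him : ∀ s : Set (WithLp 2 (H × K)), ⇑e '' closure s = closure (⇑e '' s) := by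
    intro s
    rw [← ContinuousLinearEquiv.coe_toHomeomorph]
    exact e.toHomeomorph.image_closure s
  have himg : ⇑e '' (L : Set (WithLp 2 (H × K))) =
      Set.range fun f : E => ((A f, B f) : H × K) := by
    ext p
    constructor
    · rintro ⟨q, ⟨f, rfl⟩, rfl⟩; exact ⟨f, (hTapp f).symm⟩
    · rintro ⟨f, rfl⟩; exact ⟨T f, LinearMap.mem_range_self _ f, hTapp f⟩
  have himg2 : ⇑e '' (M : Set (WithLp 2 (H × K))) =
      (Set.range ⇑A) ×ˢ (Set.range ⇑B) := by
    have hMset : (M : Set (WithLp 2 (H × K))) =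
        ⇑e ⁻¹' ((Set.range ⇑A) ×ˢ (Set.range ⇑B)) := by
      ext q
      exact Iff.rfl
    rw [hMset]
    apply Set.image_preimage_eq_of_subset
    intro p _
    exact ⟨e.symm p, e.apply_symm_apply p⟩
  have main : ⇑e '' closure (L : Set (WithLp 2 (H × K))) =
      ⇑e '' closure (M : Set (WithLp 2 (H × K))) := by
    rw [← Submodule.topologicalClosure_coe, ← Submodule.topologicalClosure_coe, hcl]
  rw [him, him, himg, himg2, closure_prod_eq] at main
  exact main

end Aux

/-- The following are equivalent: (i) `B` is singular with respect to `A`;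
(ii) `ran A* ∩ ran B* = {0}`; (iii) the closure of `L(A,B)` equals
`closure (ran A) × closure (ran B)` (`L(A,B)` is singular). -/
theorem singular_pair_tfae
    {E H K : Type}
    [NormedAddCommGroup E] [InnerProductSpace ℂ E] [CompleteSpace E]
    [NormedAddCommGroup H] [InnerProductSpace ℂ H] [CompleteSpace H]
    [NormedAddCommGroup K] [InnerProductSpace ℂ K] [CompleteSpace K]
    (A : E →L[ℂ] H) (B : E →L[ℂ] K) :
    List.TFAE
      [SingularWith A B,
      Set.range ⇑(adjoint A) ∩ Set.range ⇑(adjoint B) = {0},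
      closure (Set.range fun f : E => ((A f, B f) : H × K)) =
        (closure (Set.range ⇑A)) ×ˢ (closure (Set.range ⇑B))] := by
  tfae_have 1 → 2 := singular_aux12 A B
  tfae_have 2 → 3 := singular_aux23 A B
  tfae_have 3 → 1 := singular_aux31 A B
  tfae_finish
end

section
/- Let P be the orthogonal projection of K onto the orthogonal complement D(A,B)⊥, and set B_reg = (I − P) ∘ B and B_sing = P ∘ B. Then B = B_reg + B_sing, B_reg is almost dominated by A, and B_sing is singular with respect to A. -/
open ContinuousLinearMap

/-- A witness for almost domination of `B : E → K` by `A : E → H`: a sequence of complex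
Hilbert spaces `Kn n`, bounded operators `Bn n : E → Kn n` and constants `c n ≥ 0` such that
for all `f : E` one has `‖Bn n f‖ ≤ c n * ‖A f‖`, `‖Bn n f‖ ≤ ‖Bn (n+1) f‖` and `‖Bn n f‖`
converges (increasingly) to `‖B f‖`. -/
structure AlmostDominatedWitness
    {E H K : Type}
    [NormedAddCommGroup E] [InnerProductSpace ℂ E] [CompleteSpace E]
    [NormedAddCommGroup H] [InnerProductSpace ℂ H] [CompleteSpace H]
    [NormedAddCommGroup K] [InnerProductSpace ℂ K] [CompleteSpace K]
    (A : E →L[ℂ] H) (B : E →L[ℂ] K) where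
  Kn : ℕ → Type
  [nacg : ∀ n, NormedAddCommGroup (Kn n)]
  [ips : ∀ n, InnerProductSpace ℂ (Kn n)]
  [cs : ∀ n, CompleteSpace (Kn n)]
  Bn : ∀ n, E →L[ℂ] Kn n
  c : ℕ → ℝ
  c_nonneg : ∀ n, 0 ≤ c n
  bound : ∀ (n : ℕ) (f : E), ‖Bn n f‖ ≤ c n * ‖A f‖
  mono : ∀ (n : ℕ) (f : E), ‖Bn n f‖ ≤ ‖Bn (n + 1) f‖
  tendsto : ∀ f : E, Filter.Tendsto (fun n => ‖Bn n f‖) Filter.atTop (nhds ‖B f‖)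

/-- `B` is almost dominated by `A`. -/
def AlmostDominated
    {E H K : Type}
    [NormedAddCommGroup E] [InnerProductSpace ℂ E] [CompleteSpace E]
    [NormedAddCommGroup H] [InnerProductSpace ℂ H] [CompleteSpace H]
    [NormedAddCommGroup K] [InnerProductSpace ℂ K] [CompleteSpace K]
    (A : E →L[ℂ] H) (B : E →L[ℂ] K) : Prop :=
  Nonempty (AlmostDominatedWitness A B)

/-- The subspace `D(A,B) = {k ∈ K : B* k ∈ ran A*}`. -/
noncomputable def DAB
    {E H K : Type}
    [NormedAddCommGroup E] [InnerProductSpace ℂ E] [CompleteSpace E]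
    [NormedAddCommGroup H] [InnerProductSpace ℂ H] [CompleteSpace H]
    [NormedAddCommGroup K] [InnerProductSpace ℂ K] [CompleteSpace K]
    (A : E →L[ℂ] H) (B : E →L[ℂ] K) : Submodule ℂ K :=
  Submodule.comap (adjoint B : K →ₗ[ℂ] E) (LinearMap.range (adjoint A : H →ₗ[ℂ] E))

section Aux

private theorem aux_range_adjoint {E F G : Type}
    [NormedAddCommGroup E] [InnerProductSpace ℂ E] [CompleteSpace E]
    [NormedAddCommGroup F] [InnerProductSpace ℂ F] [CompleteSpace F]
    [NormedAddCommGroup G] [InnerProductSpace ℂ G] [CompleteSpace G]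
    (T : E →L[ℂ] F) (D : E →L[ℂ] G) (c : ℝ)
    (hle : ∀ f, ‖D f‖ ≤ c * ‖T f‖) (g : G) :
    ∃ h : F, adjoint T h = adjoint D g := by
  have wd : ∀ f f' : E, T f = T f' → D f = D f' := by
    intro f f' hff
    have h1 : ‖D f - D f'‖ ≤ c * ‖T f - T f'‖ := by
      rw [← map_sub, ← map_sub]; exact hle _
    rw [hff, sub_self, norm_zero, mul_zero] at h1
    have h2 : ‖D f - D f'‖ = 0 := le_antisymm h1 (norm_nonneg _)
    rwa [norm_sub_eq_zero_iff] at h2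
  choose sec hsec using fun y : LinearMap.range (T : E →ₗ[ℂ] F) =>
    (⟨_, (LinearMap.mem_range.mp y.2).choose_spec⟩ : ∃ x, T x = y)
  let l : (LinearMap.range (T : E →ₗ[ℂ] F) : Submodule ℂ F) →ₗ[ℂ] ℂ :=
    { toFun := fun y => inner (𝕜 := ℂ) g (D (sec y))
      map_add' := by
        intro y z
        have h3 : D (sec (y + z)) = D (sec y) + D (sec z) := by
          rw [← map_add]
          apply wd
          rw [map_add, hsec, hsec, hsec]; rfl
        show (inner (𝕜 := ℂ) g (D (sec (y + z))) : ℂ) = inner (𝕜 := ℂ) g (D (sec y)) + inner (𝕜 := ℂ) g (D (sec z))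
        rw [h3, inner_add_right]
      map_smul' := by
        intro a y
        have h3 : D (sec (a • y)) = a • D (sec y) := by
          rw [← map_smul]
          apply wd
          rw [map_smul, hsec, hsec]; rfl
        show (inner (𝕜 := ℂ) g (D (sec (a • y))) : ℂ) = (RingHom.id ℂ) a • (inner (𝕜 := ℂ) g (D (sec y)) : ℂ)
        rw [h3, inner_smul_right]; rfl }
  have hbound : ∀ y : LinearMap.range (T : E →ₗ[ℂ] F), ‖l y‖ ≤ (c * ‖g‖) * ‖y‖ := by
    intro y
    have h1 : ‖(inner (𝕜 := ℂ) g (D (sec y)) : ℂ)‖ ≤ ‖g‖ * ‖D (sec y)‖ := norm_inner_le_norm _ _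
    have h2 : ‖D (sec y)‖ ≤ c * ‖T (sec y)‖ := hle _
    rw [hsec y] at h2
    have h4 : ‖(y : F)‖ = ‖y‖ := rfl
    calc ‖l y‖ ≤ ‖g‖ * ‖D (sec y)‖ := h1
    _ ≤ ‖g‖ * (c * ‖(y : F)‖) := by
        apply mul_le_mul_of_nonneg_left h2 (norm_nonneg g)
    _ = (c * ‖g‖) * ‖y‖ := by rw [h4]; ring
  obtain ⟨ψ, hψ, -⟩ := exists_extension_norm_eq (LinearMap.range (T : E →ₗ[ℂ] F))
    (l.mkContinuous (c * ‖g‖) hbound)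
  refine ⟨(InnerProductSpace.toDual ℂ F).symm ψ, ?_⟩
  apply ext_inner_right ℂ
  intro f
  rw [adjoint_inner_left, adjoint_inner_left]
  have h5 : (inner ℂ ((InnerProductSpace.toDual ℂ F).symm ψ) (T f)) = ψ (T f) :=
    InnerProductSpace.toDual_symm_apply
  rw [h5]
  have hmem : T f ∈ LinearMap.range (T : E →ₗ[ℂ] F) := LinearMap.mem_range.mpr ⟨f, rfl⟩
  have h6 : ψ (T f) = l ⟨T f, hmem⟩ := hψ ⟨T f, hmem⟩
  rw [h6]
  show (inner (𝕜 := ℂ) g (D (sec ⟨T f, hmem⟩)) : ℂ) = _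
  rw [wd (sec ⟨T f, hmem⟩) f (hsec ⟨T f, hmem⟩)]

set_option maxHeartbeats 1000000
set_option linter.unusedSectionVars false
set_option linter.unusedVariables false
open ContinuousLinearMap

variable {E H K : Type}
    [NormedAddCommGroup E] [InnerProductSpace ℂ E] [CompleteSpace E]
    [NormedAddCommGroup H] [InnerProductSpace ℂ H] [CompleteSpace H]
    [NormedAddCommGroup K] [InnerProductSpace ℂ K] [CompleteSpace K]

noncomputable def auxMap (A : E →L[ℂ] H) (Br : E →L[ℂ] K) (r : ℝ) :
    E →L[ℂ] WithLp 2 (K × H) :=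
  (WithLp.prodContinuousLinearEquiv 2 ℂ K H).symm.toContinuousLinearMap ∘L
    (Br.prod ((r : ℂ) • A))

example (A : E →L[ℂ] H) (Br : E →L[ℂ] K) (r : ℝ) (f g : E) :
    (auxMap A Br 0 f - auxMap A Br r g).fst = Br f - Br g := rfl

example (A : E →L[ℂ] H) (Br : E →L[ℂ] K) (r : ℝ) (f g : E) :
    (auxMap A Br 0 f - auxMap A Br r g).snd = (0:ℂ) • A f - (r:ℂ) • A g := rfl

lemma auxMap_sub_norm_sq (A : E →L[ℂ] H) (Br : E →L[ℂ] K) (f g : E) (r : ℝ) (hr : 0 ≤ r) :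
    ‖auxMap A Br 0 f - auxMap A Br r g‖^2 = ‖Br f - Br g‖^2 + (r * ‖A g‖)^2 := by
  have h1 : (auxMap A Br 0 f - auxMap A Br r g).fst = Br f - Br g := rfl
  have h2 : (auxMap A Br 0 f - auxMap A Br r g).snd = (0:ℂ) • A f - (r:ℂ) • A g := rfl
  rw [WithLp.prod_norm_sq_eq_of_L2, h1, h2, zero_smul, zero_sub, norm_neg, norm_smul,
    Complex.norm_real, Real.norm_eq_abs, abs_of_nonneg hr]

noncomputable def auxS (A : E →L[ℂ] H) (Br : E →L[ℂ] K) (n : ℕ) :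
    Submodule ℂ (WithLp 2 (K × H)) :=
  (LinearMap.range (auxMap A Br (Real.sqrt n) : E →ₗ[ℂ] WithLp 2 (K × H))).topologicalClosure

noncomputable def auxBn (A : E →L[ℂ] H) (Br : E →L[ℂ] K) (n : ℕ) :
    E →L[ℂ] WithLp 2 (K × H) :=
  haveI : CompleteSpace (auxS A Br n) :=
    (Submodule.isClosed_topologicalClosure
      (LinearMap.range (auxMap A Br (Real.sqrt n) : E →ₗ[ℂ] WithLp 2 (K × H)))).completeSpace_coe
  auxMap A Br 0 - ((auxS A Br n).subtypeL ∘L Submodule.orthogonalProjection (auxS A Br n)) ∘L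
    auxMap A Br 0

lemma aux_sqle {a b : ℝ} (ha : 0 ≤ a) (hb : 0 ≤ b) (h : a^2 ≤ b^2) : a ≤ b := by nlinarith

lemma auxBn_min (A : E →L[ℂ] H) (Br : E →L[ℂ] K) (n : ℕ) (f : E)
    (v : WithLp 2 (K × H)) (hv : v ∈ auxS A Br n) :
    ‖auxBn A Br n f‖ ≤ ‖auxMap A Br 0 f - v‖ := by
  haveI : CompleteSpace (auxS A Br n) :=
    (Submodule.isClosed_topologicalClosure
      (LinearMap.range (auxMap A Br (Real.sqrt n) : E →ₗ[ℂ] WithLp 2 (K × H)))).completeSpace_coe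
  have hBnf : auxBn A Br n f
      = auxMap A Br 0 f
        - ((Submodule.orthogonalProjection (auxS A Br n) (auxMap A Br 0 f) : auxS A Br n)
            : WithLp 2 (K × H)) := rfl
  rw [hBnf, show ((Submodule.orthogonalProjection (auxS A Br n) (auxMap A Br 0 f) : auxS A Br n)
      : WithLp 2 (K × H)) = (auxS A Br n).starProjection (auxMap A Br 0 f) from rfl,
    Submodule.starProjection_minimal]
  exact ciInf_le ⟨0, by rintro x ⟨w, rfl⟩; exact norm_nonneg _⟩ (⟨v, hv⟩ : auxS A Br n)

lemma auxBn_dist (A : E →L[ℂ] H) (Br : E →L[ℂ] K) (n : ℕ) (f : E) {ε : ℝ} (hε : 0 < ε) :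
    ∃ g : E, ‖auxMap A Br 0 f - auxMap A Br (Real.sqrt n) g‖ ≤ ‖auxBn A Br n f‖ + ε := by
  haveI : CompleteSpace (auxS A Br n) :=
    (Submodule.isClosed_topologicalClosure
      (LinearMap.range (auxMap A Br (Real.sqrt n) : E →ₗ[ℂ] WithLp 2 (K × H)))).completeSpace_coe
  set p : WithLp 2 (K × H) :=
    ((Submodule.orthogonalProjection (auxS A Br n) (auxMap A Br 0 f) : auxS A Br n)
      : WithLp 2 (K × H)) with hp
  have hBnf : auxBn A Br n f = auxMap A Br 0 f - p := rfl
  have hpmem : p ∈ closure (Set.range (auxMap A Br (Real.sqrt n))) := by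
    have h1 := (Submodule.orthogonalProjection (auxS A Br n) (auxMap A Br 0 f)).2
    have h2 : (auxS A Br n : Set (WithLp 2 (K × H)))
        = closure (Set.range ⇑(auxMap A Br (Real.sqrt n))) := by
      unfold auxS
      rw [Submodule.topologicalClosure_coe, LinearMap.coe_range, ContinuousLinearMap.coe_coe]
    have h3 : p ∈ (auxS A Br n : Set (WithLp 2 (K × H))) := h1
    rwa [h2] at h3
  obtain ⟨b, ⟨g, rfl⟩, hd⟩ := Metric.mem_closure_iff.mp hpmem ε hε
  refine ⟨g, ?_⟩
  calc ‖auxMap A Br 0 f - auxMap A Br (Real.sqrt n) g‖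
      ≤ ‖auxMap A Br 0 f - p‖ + ‖p - auxMap A Br (Real.sqrt n) g‖ := by
        have := norm_sub_le_norm_sub_add_norm_sub (auxMap A Br 0 f) p (auxMap A Br (Real.sqrt n) g)
        exact this
  _ ≤ ‖auxBn A Br n f‖ + ε := by
        rw [hBnf]
        have : ‖p - auxMap A Br (Real.sqrt n) g‖ ≤ ε := by
          rw [← dist_eq_norm]; exact hd.le
        linarith

theorem aux_almost (A : E →L[ℂ] H) (Br : E →L[ℂ] K) (S : Submodule ℂ K)
    (hcl : ∀ f, Br f ∈ closure (S : Set K))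
    (hdom : ∀ k ∈ S, ∃ h : H, ∀ g : E, (inner ℂ k (Br g)) = inner ℂ h (A g)) :
    AlmostDominated A Br := by
  have hWmem : ∀ (n : ℕ) (g : E), auxMap A Br (Real.sqrt n) g ∈ auxS A Br n :=
    fun n g => (LinearMap.range (auxMap A Br (Real.sqrt n) : E →ₗ[ℂ] WithLp 2 (K × H))).le_topologicalClosure
      (LinearMap.mem_range_self _ g)
  have hJnorm : ∀ f : E, ‖auxMap A Br 0 f‖ = ‖Br f‖ := by
    intro f
    have h1 := auxMap_sub_norm_sq A Br f 0 0 le_rfl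
    simp only [map_zero, sub_zero, zero_mul] at h1
    norm_num at h1
    exact h1
  have hcomp : ∀ (f g : E) (n : ℕ),
      ‖Br f - Br g‖ ≤ ‖auxMap A Br 0 f - auxMap A Br (Real.sqrt n) g‖ ∧
      Real.sqrt n * ‖A g‖ ≤ ‖auxMap A Br 0 f - auxMap A Br (Real.sqrt n) g‖ := by
    intro f g n
    have h1 := auxMap_sub_norm_sq A Br f g _ (Real.sqrt_nonneg n)
    constructor
    · exact aux_sqle (norm_nonneg _) (norm_nonneg _)
        (by nlinarith [sq_nonneg (Real.sqrt n * ‖A g‖)])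
    · exact aux_sqle (mul_nonneg (Real.sqrt_nonneg n) (norm_nonneg _)) (norm_nonneg _)
        (by nlinarith [sq_nonneg (‖Br f - Br g‖)])
  have hbound : ∀ (n : ℕ) (f : E), ‖auxBn A Br n f‖ ≤ Real.sqrt n * ‖A f‖ := by
    intro n f
    refine (auxBn_min A Br n f _ (hWmem n f)).trans ?_
    have h1 := auxMap_sub_norm_sq A Br f f _ (Real.sqrt_nonneg n)
    rw [sub_self, norm_zero] at h1
    exact aux_sqle (norm_nonneg _) (mul_nonneg (Real.sqrt_nonneg n) (norm_nonneg _))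
      (by nlinarith [h1])
  have hleR : ∀ (n : ℕ) (f : E), ‖auxBn A Br n f‖ ≤ ‖Br f‖ := by
    intro n f
    refine (auxBn_min A Br n f 0 (zero_mem _)).trans ?_
    rw [sub_zero, hJnorm]
  have hmono : ∀ (n : ℕ) (f : E), ‖auxBn A Br n f‖ ≤ ‖auxBn A Br (n+1) f‖ := by
    intro n f
    refine le_of_forall_pos_le_add ?_
    intro ε hε
    obtain ⟨g, hg⟩ := auxBn_dist A Br (n+1) f hε
    refine (auxBn_min A Br n f _ (hWmem n g)).trans (le_trans ?_ hg)
    apply aux_sqle (norm_nonneg _) (norm_nonneg _)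
    rw [auxMap_sub_norm_sq A Br f g (Real.sqrt ((n:ℕ):ℝ)) (Real.sqrt_nonneg _),
        auxMap_sub_norm_sq A Br f g (Real.sqrt ((n+1:ℕ):ℝ)) (Real.sqrt_nonneg _)]
    have hs : Real.sqrt ((n:ℕ):ℝ) ≤ Real.sqrt ((n+1:ℕ):ℝ) :=
      Real.sqrt_le_sqrt (by push_cast; linarith)
    have h2 : Real.sqrt ((n:ℕ):ℝ) * ‖A g‖ ≤ Real.sqrt ((n+1:ℕ):ℝ) * ‖A g‖ :=
      mul_le_mul_of_nonneg_right hs (norm_nonneg _)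
    nlinarith [mul_nonneg (Real.sqrt_nonneg ((n:ℕ):ℝ)) (norm_nonneg (A g))]
  have htend : ∀ f : E, Filter.Tendsto (fun n => ‖auxBn A Br n f‖) Filter.atTop
      (nhds ‖Br f‖) := by
    intro f
    set R := ‖Br f‖ with hRdef
    have hRnn : 0 ≤ R := norm_nonneg _
    have hbdd : BddAbove (Set.range fun n => ‖auxBn A Br n f‖) :=
      ⟨R, by rintro x ⟨n, rfl⟩; exact hleR n f⟩
    have hmo : Monotone fun n => ‖auxBn A Br n f‖ := monotone_nat_of_le_succ fun n => hmono n f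
    have h1 := tendsto_atTop_ciSup hmo hbdd
    set L := ⨆ n, ‖auxBn A Br n f‖ with hLdef
    have hLleR : L ≤ R := ciSup_le fun n => hleR n f
    have hL0 : 0 ≤ L := le_trans (norm_nonneg _) (le_ciSup hbdd 0)
    have hLR : L = R := by
      refine le_antisymm hLleR ?_
      have key : ∀ ε : ℝ, 0 < ε → R^2 ≤ R*L + ε := by
        intro ε hε
        have hden1 : (0:ℝ) < 3 * (2*R+2) := by linarith
        set δ := min 1 (ε / (3 * (2*R+2))) with hδdef
        have hδpos : 0 < δ := lt_min one_pos (div_pos hε hden1)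
        obtain ⟨k, hkS, hkd⟩ := Metric.mem_closure_iff.mp (hcl f) δ hδpos
        obtain ⟨h, hhk⟩ := hdom k hkS
        obtain ⟨m, hm⟩ := exists_nat_ge ((3 * ‖h‖ * (R+1) / ε)^2)
        set n := m + 1 with hndef
        have hncast : ((n:ℕ) : ℝ) = (m:ℝ) + 1 := by rw [hndef]; push_cast; ring
        have hs1 : (1:ℝ) ≤ Real.sqrt n := by
          rw [show (1:ℝ) = Real.sqrt 1 from Real.sqrt_one.symm]
          apply Real.sqrt_le_sqrt
          rw [hncast]; linarith [Nat.cast_nonneg (α := ℝ) m]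
        have hs2 : 3 * ‖h‖ * (R+1) / ε ≤ Real.sqrt n := by
          have hmn : (3 * ‖h‖ * (R+1) / ε)^2 ≤ ((n:ℕ) : ℝ) := by
            rw [hncast]; linarith
          calc 3 * ‖h‖ * (R+1) / ε ≤ |3 * ‖h‖ * (R+1) / ε| := le_abs_self _
          _ = Real.sqrt ((3 * ‖h‖ * (R+1) / ε)^2) := (Real.sqrt_sq_eq_abs _).symm
          _ ≤ Real.sqrt n := Real.sqrt_le_sqrt hmn
        set η := min 1 (ε / (3 * (R+1))) with hηdef
        have hηpos : 0 < η := lt_min one_pos (div_pos hε (by linarith))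
        have hη1 : η ≤ 1 := min_le_left _ _
        obtain ⟨g, hg⟩ := auxBn_dist A Br n f hηpos
        have hBnle : ‖auxBn A Br n f‖ ≤ R := hleR n f
        have hJWR : ‖auxMap A Br 0 f - auxMap A Br (Real.sqrt n) g‖ ≤ R + 1 :=
          hg.trans (by linarith)
        have hc1 : ‖Br f - Br g‖ ≤ ‖auxBn A Br n f‖ + η := le_trans (hcomp f g n).1 hg
        have hc1' : ‖Br f - Br g‖ ≤ R + 1 := le_trans (hcomp f g n).1 hJWR
        have hc2 : Real.sqrt n * ‖A g‖ ≤ R + 1 := le_trans (hcomp f g n).2 hJWR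
        have hhAg : ‖h‖ * ‖A g‖ ≤ ε/3 := by
          have hs0 : 0 < Real.sqrt n := lt_of_lt_of_le one_pos hs1
          have e1 : 3 * ‖h‖ * (Real.sqrt n * ‖A g‖) ≤ 3 * ‖h‖ * (R+1) :=
            mul_le_mul_of_nonneg_left hc2 (by positivity)
          have e2 : 3 * ‖h‖ * (R+1) ≤ Real.sqrt n * ε := by
            rw [div_le_iff₀ hε] at hs2; linarith
          nlinarith [e1, e2, hs0, mul_nonneg (norm_nonneg h) (norm_nonneg (A g))]
        have hRη : R * η ≤ ε/3 := by
          have h1' : η ≤ ε / (3 * (R+1)) := min_le_right _ _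
          have h2' : R * η ≤ R * (ε / (3 * (R+1))) := mul_le_mul_of_nonneg_left h1' hRnn
          have h5' : R * (ε / (3 * (R+1))) = R * ε / (3 * (R+1)) := by ring
          have h3' : R * ε / (3 * (R+1)) ≤ ε / 3 := by
            rw [div_le_div_iff₀ (by positivity) (by norm_num)]
            nlinarith [hε.le]
          linarith
        have hBrg : ‖Br g‖ ≤ 2*R + 2 := by
          have e1 : ‖Br g‖ = ‖Br f - (Br f - Br g)‖ := by rw [sub_sub_cancel]
          have e2 : ‖Br f - (Br f - Br g)‖ ≤ ‖Br f‖ + ‖Br f - Br g‖ := norm_sub_le _ _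
          rw [e1]; linarith [e2, hc1']
        have hδk : ‖Br f - k‖ ≤ δ := by
          rw [← dist_eq_norm]; exact hkd.le
        have hδε : δ * ‖Br g‖ ≤ ε/3 := by
          have h1' : δ ≤ ε / (3*(2*R+2)) := min_le_right _ _
          have h2' : δ * ‖Br g‖ ≤ (ε / (3*(2*R+2))) * (2*R+2) :=
            mul_le_mul h1' hBrg (norm_nonneg _) (by positivity)
          have h3' : (ε / (3*(2*R+2))) * (2*R+2) = ε/3 := by field_simp
          linarith
        have e1 : (inner ℂ (Br f - k) (Br g)) + inner ℂ k (Br g) = inner ℂ (Br f) (Br g) := by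
          rw [← inner_add_left, sub_add_cancel]
        have e2 : (inner ℂ (Br f) (Br f - Br g)) + inner ℂ (Br f) (Br g)
            = inner ℂ (Br f) (Br f) := by
          rw [← inner_add_right, sub_add_cancel]
        have hinner : (inner ℂ (Br f) (Br f))
            = inner ℂ (Br f) (Br f - Br g) + inner ℂ (Br f - k) (Br g) + inner ℂ k (Br g) := by
          rw [← e2, ← e1]; ring
        have hre : R^2 ≤ ‖(inner ℂ (Br f) (Br f - Br g))‖
            + ‖(inner ℂ (Br f - k) (Br g))‖ + ‖(inner ℂ k (Br g))‖ := by
          have h0 : R^2 = RCLike.re (inner ℂ (Br f) (Br f)) :=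
            (inner_self_eq_norm_sq (𝕜 := ℂ) (Br f)).symm
          rw [h0, hinner, map_add, map_add]
          linarith [RCLike.re_le_norm (inner ℂ (Br f) (Br f - Br g)),
            RCLike.re_le_norm (inner ℂ (Br f - k) (Br g)),
            RCLike.re_le_norm (inner ℂ k (Br g))]
        have t1 : ‖(inner ℂ (Br f) (Br f - Br g))‖ ≤ R * (‖auxBn A Br n f‖ + η) :=
          (norm_inner_le_norm _ _).trans (mul_le_mul_of_nonneg_left hc1 hRnn)
        have t2 : ‖(inner ℂ (Br f - k) (Br g))‖ ≤ δ * ‖Br g‖ :=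
          (norm_inner_le_norm _ _).trans (mul_le_mul_of_nonneg_right hδk (norm_nonneg _))
        have t3 : ‖(inner ℂ k (Br g))‖ ≤ ‖h‖ * ‖A g‖ := by
          rw [hhk g]; exact norm_inner_le_norm _ _
        have hBnL : ‖auxBn A Br n f‖ ≤ L := le_ciSup hbdd n
        have hfin : R * (‖auxBn A Br n f‖ + η) ≤ R*L + ε/3 := by
          have := mul_le_mul_of_nonneg_left hBnL hRnn
          nlinarith [hRη]
        linarith [hre, t1, t2, t3, hδε, hhAg, hfin]
      have h2 : R^2 ≤ R*L := le_of_forall_pos_le_add fun ε hε => key ε hε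
      nlinarith [h2, hL0, hLleR]
    rw [← hLR]; exact h1
  exact ⟨{ Kn := fun _ => WithLp 2 (K × H)
           nacg := fun _ => inferInstance
           ips := fun _ => inferInstance
           cs := fun _ => inferInstance
           Bn := fun n => auxBn A Br n
           c := fun n => Real.sqrt n
           c_nonneg := fun n => Real.sqrt_nonneg _
           bound := hbound
           mono := hmono
           tendsto := htend }⟩

end Aux

/-- **Lebesgue decomposition.** Let `P` be the orthogonal projection of `K`
onto `D(A,B)ᗮ` (characterized by `P k ∈ D(A,B)ᗮ` and `k - P k ⊥ D(A,B)ᗮ`), and put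
`B_reg = (I − P) ∘ B` and `B_sing = P ∘ B`. Then `B = B_reg + B_sing`, `B_reg` is almost
dominated by `A`, and `B_sing` is singular with respect to `A`. -/
theorem lebesgue_decomposition
    {E H K : Type}
    [NormedAddCommGroup E] [InnerProductSpace ℂ E] [CompleteSpace E]
    [NormedAddCommGroup H] [InnerProductSpace ℂ H] [CompleteSpace H]
    [NormedAddCommGroup K] [InnerProductSpace ℂ K] [CompleteSpace K]
    (A : E →L[ℂ] H) (B : E →L[ℂ] K) (P : K →L[ℂ] K)
    (hP : ∀ k : K, P k ∈ (DAB A B)ᗮ ∧ k - P k ∈ ((DAB A B)ᗮ)ᗮ) :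
    B = (B - P ∘L B) + P ∘L B ∧
    AlmostDominated A (B - P ∘L B) ∧
    SingularWith A (P ∘L B) := by
  have hPsa : ∀ x y : K, (inner ℂ (P x) y) = inner ℂ x (P y) := by
    intro x y
    have hy : P y + (y - P y) = y := by abel
    have h1 : (inner ℂ (P x) y) = inner ℂ (P x) (P y) + inner ℂ (P x) (y - P y) := by
      rw [← inner_add_right, hy]
    have h2 : (inner ℂ (P x) (y - P y)) = 0 :=
      (Submodule.mem_orthogonal _ _).mp (hP y).2 _ (hP x).1
    have hx : P x + (x - P x) = x := by abel
    have h3 : (inner ℂ x (P y)) = inner ℂ (P x) (P y) + inner ℂ (x - P x) (P y) := by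
      rw [← inner_add_left, hx]
    have h4 : (inner ℂ (x - P x) (P y)) = 0 := by
      have h5 : (inner ℂ (P y) (x - P x)) = 0 :=
        (Submodule.mem_orthogonal _ _).mp (hP x).2 _ (hP y).1
      rw [← inner_conj_symm, h5, map_zero]
    rw [h1, h2, h3, h4]
  refine ⟨(sub_add_cancel B (P ∘L B)).symm, ?_, ?_⟩
  · -- Almost dominated
    apply aux_almost A (B - P ∘L B) (DAB A B)
    · intro f
      have h2 := (hP (B f)).2
      rw [Submodule.orthogonal_orthogonal_eq_closure] at h2
      have e0 : (B - P ∘L B) f = B f - P (B f) := rfl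
      rw [e0, ← Submodule.topologicalClosure_coe]
      exact h2
    · intro k hk
      obtain ⟨h, hh⟩ : ∃ h, adjoint A h = adjoint B k := LinearMap.mem_range.mp (Submodule.mem_comap.mp
        (hk : k ∈ Submodule.comap (adjoint B : K →ₗ[ℂ] E) (LinearMap.range (adjoint A : H →ₗ[ℂ] E))))
      refine ⟨h, fun g => ?_⟩
      have e0 : (B - P ∘L B) g = B g - P (B g) := rfl
      rw [e0, inner_sub_right]
      have e1 : (inner ℂ k (P (B g))) = 0 :=
        (Submodule.mem_orthogonal _ _).mp (hP (B g)).1 k hk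
      have e2 : (inner ℂ k (B g)) = inner ℂ h (A g) := by
        rw [← ContinuousLinearMap.adjoint_inner_left B g k, ← hh,
          ContinuousLinearMap.adjoint_inner_left]
      rw [e1, e2, sub_zero]
  · -- Singular
    rintro D ⟨c1, _, hD1⟩ ⟨c2, _, hD2⟩
    have hPadj : adjoint P = P := by
      ext x
      refine ext_inner_right ℂ fun y => ?_
      rw [ContinuousLinearMap.adjoint_inner_left]
      exact (hPsa x y).symm
    have key : ∀ g : E, adjoint D g = 0 := by
      intro g
      obtain ⟨h, hh⟩ := aux_range_adjoint (P ∘L B) D c2 hD2 g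
      obtain ⟨h2, hh2⟩ := aux_range_adjoint A D c1 hD1 g
      have hcompadj : adjoint (P ∘L B) h = adjoint B (P h) := by
        rw [ContinuousLinearMap.adjoint_comp]
        show adjoint B (adjoint P h) = adjoint B (P h)
        rw [hPadj]
      have hmem2 : P h ∈ DAB A B := by
        refine Submodule.mem_comap.mpr (?_ : adjoint B (P h) ∈ LinearMap.range (adjoint A : H →ₗ[ℂ] E))
        rw [← hcompadj, hh, ← hh2]
        exact LinearMap.mem_range_self _ h2
      have hzero : P h = 0 := by
        have h6 := (Submodule.mem_orthogonal _ _).mp (hP h).1 (P h) hmem2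
        exact inner_self_eq_zero.mp h6
      rw [← hh, hcompadj, hzero, map_zero]
    have hDadj : adjoint D = 0 := ContinuousLinearMap.ext fun g => by
      rw [key g]; rfl
    calc D = adjoint (adjoint D) := (ContinuousLinearMap.adjoint_adjoint D).symm
    _ = adjoint 0 := by rw [hDadj]
    _ = 0 := by simp
end
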